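/- arXiv:1111.3705 — 6 statements merged into one kernel-verified Lean document; each statement's English description precedes it below -/
import Mathlib

section
/- Let V be a finite-dimensional complex representation of G with character χ_V. For any 1 ≤ k ≤ n+1 and any strictly increasing index tuples 0 ≤ i_1 < … < i_k ≤ n and 0 ≤ j_1 < … < j_k ≤ n, the k×k minor of the Clebsch–Gordan matrix M[V] on rows i_1,…,i_k and columns j_1,…,j_k equals (1/|G|^k) · Σ_{0 ≤ p_1 < … < p_k ≤ n} det(χ_{i_a}(g_{p_b}))_{1≤a,b≤k} · conj( det(χ_{j_a}(g_{p_b}))_{1≤a,b≤k} ) · Π_{m=1}^k |C_{p_m}|·χ_V(g_{p_m}). -/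
open CategoryTheory
open scoped Classical

/-- Inner product of class functions: `⟨a, b⟩ = (1/|G|) Σ_{g∈G} a(g)·conj(b(g))`. -/
noncomputable def cgIP {G : Type*} [Group G] [Fintype G] (a b : G → ℂ) : ℂ :=
  (Fintype.card G : ℂ)⁻¹ * ∑ x : G, a x * (starRingEnd ℂ) (b x)

/-- The size of the conjugacy class of `x`. -/
noncomputable def classCard {G : Type*} [Group G] (x : G) : ℕ :=
  Nat.card {y : G // IsConj x y}

open Finset Matrix

/-- Cauchy–Binet formula. -/
lemma cauchyBinet {N k : ℕ} (A : Matrix (Fin k) (Fin N) ℂ) (B : Matrix (Fin N) (Fin k) ℂ) :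
    (A * B).det = ∑ P ∈ Finset.univ.filter (fun P : Fin k → Fin N => StrictMono P),
      (A.submatrix id P).det * (B.submatrix P id).det := by
  classical
  have h1 : (A * B).det = ∑ f : Fin k → Fin N,
      (∏ i, B (f i) i) * (A.submatrix id f).det := by
    rw [Matrix.det_apply']
    simp only [Matrix.mul_apply]
    simp only [Finset.prod_univ_sum, Fintype.piFinset_univ, Finset.mul_sum]
    rw [Finset.sum_comm]
    refine Finset.sum_congr rfl fun f _ => ?_
    rw [Matrix.det_apply', Finset.mul_sum]
    refine Finset.sum_congr rfl fun σ _ => ?_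
    simp only [Matrix.submatrix_apply, id_eq]
    rw [Finset.prod_mul_distrib]
    ring
  rw [h1]
  have h2 : ∑ f : Fin k → Fin N, (∏ i, B (f i) i) * (A.submatrix id f).det
      = ∑ f ∈ Finset.univ.filter (fun f : Fin k → Fin N => Function.Injective f),
        (∏ i, B (f i) i) * (A.submatrix id f).det := by
    refine (Finset.sum_subset (Finset.filter_subset _ _) fun f _ hf => ?_).symm
    have hninj : ¬ Function.Injective f := by simpa using hf
    rw [Function.not_injective_iff] at hninj
    obtain ⟨a, b, hab, hne⟩ := hninj
    have : (A.submatrix id f).det = 0 := by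
      rw [← Matrix.det_transpose]
      refine Matrix.det_zero_of_row_eq hne ?_
      ext j
      simp [Matrix.transpose_apply, Matrix.submatrix_apply, hab]
    rw [this, mul_zero]
  rw [h2]
  have h3 : ∑ f ∈ Finset.univ.filter (fun f : Fin k → Fin N => Function.Injective f),
        (∏ i, B (f i) i) * (A.submatrix id f).det
      = ∑ Pσ ∈ (Finset.univ.filter (fun P : Fin k → Fin N => StrictMono P)) ×ˢ
          (Finset.univ : Finset (Equiv.Perm (Fin k))),
        (∏ i, B (Pσ.1 (Pσ.2 i)) i) * ((Equiv.Perm.sign Pσ.2 : ℂ) * (A.submatrix id Pσ.1).det) := by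
    refine Finset.sum_nbij' (fun f => (f ∘ Tuple.sort f, (Tuple.sort f)⁻¹))
      (fun Pσ => Pσ.1 ∘ Pσ.2) ?_ ?_ ?_ ?_ ?_
    · intro f hf
      have hinj : Function.Injective f := by simpa using hf
      simp only [Finset.mem_product, Finset.mem_filter, Finset.mem_univ, true_and, and_true]
      exact (Tuple.monotone_sort f).strictMono_of_injective
        (hinj.comp (Tuple.sort f).injective)
    · intro Pσ hPσ
      have hP : StrictMono Pσ.1 := by
        simpa using (Finset.mem_product.1 hPσ).1
      simp only [Finset.mem_filter, Finset.mem_univ, true_and]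
      exact hP.injective.comp Pσ.2.injective
    · intro f hf
      have hinj : Function.Injective f := by simpa using hf
      funext x
      simp [Function.comp]
    · intro Pσ hPσ
      have hP : StrictMono Pσ.1 := by
        simpa using (Finset.mem_product.1 hPσ).1
      set f := Pσ.1 ∘ Pσ.2 with hf
      have hinj : Function.Injective f := hP.injective.comp Pσ.2.injective
      have hQ : StrictMono (f ∘ Tuple.sort f) :=
        (Tuple.monotone_sort f).strictMono_of_injective (hinj.comp (Tuple.sort f).injective)
      have hrange : Set.range (f ∘ Tuple.sort f) = Set.range Pσ.1 := by
        rw [Set.range_comp, Equiv.range_eq_univ, Set.image_univ, hf,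
          Set.range_comp, Equiv.range_eq_univ, Set.image_univ]
      have hQP : f ∘ Tuple.sort f = Pσ.1 := (hQ.range_inj hP).1 hrange
      have hσ : (Tuple.sort f)⁻¹ = Pσ.2 := by
        refine Equiv.ext fun x => ?_
        have h1' := congrFun hQP ((Tuple.sort f)⁻¹ x)
        simp only [Function.comp_apply, Equiv.Perm.coe_inv, Equiv.apply_symm_apply, hf] at h1'
        exact (hP.injective h1').symm
      rw [Prod.ext_iff]
      exact ⟨hQP, hσ⟩
    · intro f hf
      have hinj : Function.Injective f := by simpa using hf
      set τ : Equiv.Perm (Fin k) := (Tuple.sort f)⁻¹ with hτ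
      have key : (A.submatrix id f).det
          = (Equiv.Perm.sign τ : ℂ) * (A.submatrix id (f ∘ Tuple.sort f)).det := by
        have heq : A.submatrix id f
            = (A.submatrix id (f ∘ Tuple.sort f)).submatrix id ⇑τ := by
          ext x y
          simp [hτ, Matrix.submatrix_apply]
        rw [heq, Matrix.det_permute']
      rw [key]
      have hprod : (∏ i, B (f i) i)
          = ∏ i, B ((f ∘ Tuple.sort f) (τ i)) i := by
        refine Finset.prod_congr rfl fun i _ => ?_
        simp [hτ, Function.comp]
      rw [hprod]
  rw [h3, Finset.sum_product]
  refine Finset.sum_congr rfl fun P hP => ?_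
  rw [Matrix.det_apply' (B.submatrix P id)]
  rw [Finset.mul_sum]
  refine Finset.sum_congr rfl fun σ _ => ?_
  simp only [Matrix.submatrix_apply, id_eq]
  ring

/-- Summing a class function over the group equals the class-size weighted sum
over representatives. -/
lemma sum_classes {G : Type} [Group G] [Fintype G] {n : ℕ}
    (g : Fin (n + 1) → G) (hg : ∀ x : G, ∃! k : Fin (n + 1), IsConj (g k) x)
    (f : G → ℂ) (hf : ∀ x y : G, IsConj x y → f x = f y) :
    ∑ x : G, f x = ∑ p : Fin (n + 1), (classCard (g p) : ℂ) * f (g p) := by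
  classical
  have key := Finset.sum_fiberwise Finset.univ (fun x : G => (hg x).choose) f
  rw [← key]
  refine Finset.sum_congr rfl fun p _ => ?_
  have hfilter : Finset.univ.filter (fun x : G => (hg x).choose = p)
      = Finset.univ.filter (fun x : G => IsConj (g p) x) := by
    ext x
    simp only [Finset.mem_filter, Finset.mem_univ, true_and]
    constructor
    · rintro rfl
      exact (hg x).choose_spec.1
    · intro h
      exact ((hg x).choose_spec.2 p h).symm ▸ rfl
  rw [hfilter]
  have hconst : ∀ x ∈ Finset.univ.filter (fun x : G => IsConj (g p) x), f x = f (g p) := by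
    intro x hx
    have : IsConj (g p) x := by simpa using hx
    exact (hf _ _ this).symm
  rw [Finset.sum_congr rfl hconst, Finset.sum_const, nsmul_eq_mul]
  congr 1
  rw [classCard, Nat.card_eq_fintype_card, Fintype.card_subtype]

theorem stmt1 {G : Type} [Group G] [Fintype G] {n : ℕ}
    (g : Fin (n + 1) → G) (hg1 : g 0 = 1)
    (hg : ∀ x : G, ∃! k : Fin (n + 1), IsConj (g k) x)
    (R : Fin (n + 1) → FDRep ℂ G)
    (hsimple : ∀ i, Simple (R i))
    (htriv : ∀ x : G, (R 0).character x = 1)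
    (hdist : ∀ i j, i ≠ j → ¬ Nonempty (R i ≅ R j))
    (V : FDRep ℂ G)
    (k : ℕ) (hk1 : 1 ≤ k) (hk2 : k ≤ n + 1)
    (I J : Fin k → Fin (n + 1)) (hI : StrictMono I) (hJ : StrictMono J) :
    ((Matrix.of fun i j : Fin (n + 1) =>
        cgIP (V.character * (R i).character) ((R j).character)).submatrix I J).det =
      (Fintype.card G : ℂ)⁻¹ ^ k *
        ∑ P ∈ Finset.univ.filter (fun P : Fin k → Fin (n + 1) => StrictMono P),
          (Matrix.of fun a b : Fin k => (R (I a)).character (g (P b))).det *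
            (starRingEnd ℂ) (Matrix.of fun a b : Fin k => (R (J a)).character (g (P b))).det *
            ∏ m : Fin k, ((classCard (g (P m)) : ℂ) * V.character (g (P m))) := by
  classical
  -- characters are class functions
  have hchar : ∀ (W : FDRep ℂ G) (x y : G), IsConj x y → W.character x = W.character y := by
    intro W x y hxy
    rw [isConj_iff] at hxy
    obtain ⟨c, rfl⟩ := hxy
    exact (FDRep.char_conj W x c).symm
  -- the decomposition M = A' * C'
  set A' : Matrix (Fin k) (Fin (n + 1)) ℂ :=
    Matrix.of fun a p => (R (I a)).character (g p) with hA'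
  set C' : Matrix (Fin (n + 1)) (Fin k) ℂ :=
    Matrix.of fun p b => (Fintype.card G : ℂ)⁻¹ * (classCard (g p) : ℂ) *
      V.character (g p) * (starRingEnd ℂ) ((R (J b)).character (g p)) with hC'
  have hM : (Matrix.of fun i j : Fin (n + 1) =>
        cgIP (V.character * (R i).character) ((R j).character)).submatrix I J = A' * C' := by
    ext a b
    simp only [Matrix.submatrix_apply, Matrix.of_apply, Matrix.mul_apply, hA', hC',
      Matrix.of_apply]
    rw [cgIP]
    have hcf : ∀ x y : G, IsConj x y →
        (fun z => (V.character * (R (I a)).character) z *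
          (starRingEnd ℂ) ((R (J b)).character z)) x
        = (fun z => (V.character * (R (I a)).character) z *
          (starRingEnd ℂ) ((R (J b)).character z)) y := by
      intro x y hxy
      simp only [Pi.mul_apply]
      rw [hchar V x y hxy, hchar (R (I a)) x y hxy, hchar (R (J b)) x y hxy]
    rw [sum_classes g hg _ hcf]
    rw [Finset.mul_sum]
    refine Finset.sum_congr rfl fun p _ => ?_
    simp only [Pi.mul_apply]
    ring
  rw [hM, cauchyBinet A' C', Finset.mul_sum]
  refine Finset.sum_congr rfl fun P hP => ?_
  -- compute det of the C'-submatrix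
  have hCdet : (C'.submatrix P id).det =
      (∏ a : Fin k, ((Fintype.card G : ℂ)⁻¹ * ((classCard (g (P a)) : ℂ) *
        V.character (g (P a))))) *
      (starRingEnd ℂ) (Matrix.of fun a b : Fin k => (R (J a)).character (g (P b))).det := by
    have hsub : C'.submatrix P id = Matrix.of fun a b : Fin k =>
        ((Fintype.card G : ℂ)⁻¹ * ((classCard (g (P a)) : ℂ) * V.character (g (P a)))) *
          ((Matrix.of fun a b : Fin k => (R (J a)).character (g (P b)))ᵀ.map
            (starRingEnd ℂ)) a b := by
      ext a b
      simp only [Matrix.submatrix_apply, hC', Matrix.of_apply, Matrix.map_apply,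
        Matrix.transpose_apply, id_eq]
      ring
    rw [hsub, Matrix.det_mul_column]
    congr 1
    rw [show ((Matrix.of fun a b : Fin k => (R (J a)).character (g (P b)))ᵀ.map (starRingEnd ℂ))
        = (starRingEnd ℂ : ℂ →+* ℂ).mapMatrix
          (Matrix.of fun a b : Fin k => (R (J a)).character (g (P b)))ᵀ from rfl]
    rw [← RingHom.map_det, Matrix.det_transpose]
  have hAdet : (A'.submatrix id P).det =
      (Matrix.of fun a b : Fin k => (R (I a)).character (g (P b))).det := rfl
  rw [hAdet, hCdet, Finset.prod_mul_distrib, Finset.prod_const]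
  simp only [Finset.card_univ, Fintype.card_fin]
  ring
end

section
/- Let ρ: G → GL_d(ℂ) be a representation, and for m ≥ 0 let e_m: G → ℂ be the class function assigning to g the coefficient of q^m in the polynomial det(1 + q·ρ(g)) (the character of the m-th exterior power of ρ). Let A(q) be the (n+1)×(n+1) matrix over ℂ[q] with entries A(q)^i_j = Σ_{m=0}^d q^m · ⟨e_m·χ_i, χ_j⟩. Then for any 1 ≤ k ≤ n+1 and strictly increasing tuples 0 ≤ i_1 < … < i_k ≤ n, 0 ≤ j_1 < … < j_k ≤ n, the corresponding k×k minor of A(q) equals, as a polynomial in q, (1/|G|^k) · Σ_{0 ≤ p_1 < … < p_k ≤ n} det(χ_{i_a}(g_{p_b})) · conj( det(χ_{j_a}(g_{p_b})) ) · Π_{m=1}^k |C_{p_m}|·det(1 + q·ρ(g_{p_m})). -/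
open CategoryTheory Polynomial
open scoped Classical

section Aux

open Finset Matrix Equiv

/-- Cauchy–Binet formula. -/
lemma auxCauchyBinet {R : Type*} [CommRing R] {k N : ℕ}
    (L : Matrix (Fin k) (Fin N) R) (M : Matrix (Fin N) (Fin k) R) :
    (L * M).det = ∑ f ∈ Finset.univ.filter (fun f : Fin k → Fin N => StrictMono f),
      (L.submatrix id f).det * (M.submatrix f id).det := by
  have step1 : (L * M).det = ∑ f : Fin k → Fin N,
      (L.submatrix id f).det * ∏ i, M (f i) i := by
    rw [Matrix.det_apply']
    have : ∀ σ : Equiv.Perm (Fin k),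
        (∏ i, (L * M) (σ i) i) = ∑ f : Fin k → Fin N,
          (∏ i, L (σ i) (f i)) * ∏ i, M (f i) i := by
      intro σ
      simp only [Matrix.mul_apply]
      rw [Finset.prod_univ_sum]
      refine Finset.sum_congr rfl fun f _ => ?_
      rw [Finset.prod_mul_distrib]
    simp only [this, Finset.mul_sum]
    rw [Finset.sum_comm]
    refine Finset.sum_congr rfl fun f _ => ?_
    rw [Matrix.det_apply', Finset.sum_mul]
    refine Finset.sum_congr rfl fun σ _ => ?_
    simp [Matrix.submatrix_apply, mul_assoc]
  rw [step1]
  rw [← Finset.sum_filter_add_sum_filter_not Finset.univ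
    (fun f : Fin k → Fin N => Function.Injective f)]
  have hnon : ∑ f ∈ Finset.univ.filter
      (fun f : Fin k → Fin N => ¬ Function.Injective f),
      (L.submatrix id f).det * ∏ i, M (f i) i = 0 := by
    refine Finset.sum_eq_zero fun f hf => ?_
    rw [Finset.mem_filter] at hf
    simp only [Function.Injective] at hf
    push_neg at hf
    obtain ⟨a, b, hab, hne⟩ := hf.2
    rw [Matrix.det_zero_of_column_eq hne fun i => by simp [hab]]
    exact zero_mul _
  rw [hnon, add_zero]
  have key : ∑ f ∈ Finset.univ.filter (fun f : Fin k → Fin N => Function.Injective f),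
      (L.submatrix id f).det * ∏ i, M (f i) i
    = ∑ p ∈ (Finset.univ.filter (fun f : Fin k → Fin N => StrictMono f)) ×ˢ
        (Finset.univ : Finset (Equiv.Perm (Fin k))),
      (L.submatrix id p.1).det *
        ((Equiv.Perm.sign p.2 : ℤ) * ∏ i, M (p.1 (p.2 i)) i) := by
    refine Finset.sum_nbij' (i := fun f => (f ∘ Tuple.sort f, (Tuple.sort f)⁻¹))
      (j := fun p => p.1 ∘ p.2) ?_ ?_ ?_ ?_ ?_
    · intro f hf
      simp only [Finset.mem_filter, Finset.mem_univ, true_and] at hf ⊢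
      rw [Finset.mem_product]
      refine ⟨?_, Finset.mem_univ _⟩
      simp only [Finset.mem_filter, Finset.mem_univ, true_and]
      exact (Tuple.monotone_sort f).strictMono_of_injective
        (hf.comp (Tuple.sort f).injective)
    · intro p hp
      rw [Finset.mem_product] at hp
      simp only [Finset.mem_filter, Finset.mem_univ, true_and] at hp ⊢
      exact hp.1.injective.comp p.2.injective
    · intro f hf
      funext x
      simp [Function.comp]
    · intro p hp
      rw [Finset.mem_product] at hp
      simp only [Finset.mem_filter, Finset.mem_univ, true_and] at hp
      obtain ⟨f₀, τ⟩ := p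
      simp only at hp ⊢
      set σ := Tuple.sort (f₀ ∘ τ) with hσ
      have hmono : Monotone ((f₀ ∘ ⇑τ) ∘ ⇑σ) := Tuple.monotone_sort _
      have hsm : StrictMono ((f₀ ∘ ⇑τ) ∘ ⇑σ) :=
        hmono.strictMono_of_injective
          ((hp.1.injective.comp τ.injective).comp σ.injective)
      have hrange : Set.range ((f₀ ∘ ⇑τ) ∘ ⇑σ) = Set.range f₀ :=
        Function.Surjective.range_comp (τ.surjective.comp σ.surjective) f₀
      have heq : (f₀ ∘ ⇑τ) ∘ ⇑σ = f₀ := (hsm.range_inj hp.1).mp hrange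
      have hτσ : ∀ x, τ (σ x) = x := by
        intro x
        apply hp.1.injective
        exact congrFun heq x
      have hστ : σ = τ⁻¹ := by
        ext x
        exact congrArg Fin.val ((Equiv.eq_symm_apply τ).mpr (hτσ x))
      rw [heq, hστ, inv_inv]
    · intro f hf
      simp only [Finset.mem_filter, Finset.mem_univ, true_and] at hf
      have hdet : (L.submatrix id f).det =
          (Equiv.Perm.sign (Tuple.sort f)⁻¹ : ℤ) *
            (L.submatrix id (f ∘ Tuple.sort f)).det := by
        have : L.submatrix id (f ∘ ⇑(Tuple.sort f)) =
            (L.submatrix id f).submatrix id (Tuple.sort f) := by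
          rw [Matrix.submatrix_submatrix]; rfl
        rw [this, Matrix.det_permute', ← mul_assoc, ← Int.cast_mul, ← Units.val_mul,
          Equiv.Perm.sign_inv, Int.units_mul_self]
        simp
      rw [hdet]
      have : ∀ i, M (f i) i = M ((f ∘ ⇑(Tuple.sort f)) ((Tuple.sort f)⁻¹ i)) i := by
        intro i; simp [Function.comp]
      rw [Finset.prod_congr rfl fun i _ => this i]
      ring
  rw [key, Finset.sum_product]
  refine Finset.sum_congr rfl fun f₀ hf₀ => ?_
  dsimp only
  rw [← Finset.mul_sum]
  congr 1
  rw [Matrix.det_apply']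
  refine Finset.sum_congr rfl fun τ _ => ?_
  congr 1

/-- Summing a class function over the group, via conjugacy classes. -/
lemma auxSumConjClasses {G : Type} [Group G] [Fintype G] {n : ℕ} (g : Fin (n + 1) → G)
    (hg : ∀ x : G, ∃! k : Fin (n + 1), IsConj (g k) x)
    {R : Type*} [CommRing R] (F : G → R) (hF : ∀ x y : G, IsConj x y → F x = F y) :
    ∑ x : G, F x = ∑ p : Fin (n + 1), (classCard (g p) : R) * F (g p) := by
  have hc : ∀ x : G, IsConj (g ((hg x).choose)) x := fun x => (hg x).choose_spec.1
  have hcu : ∀ (x : G) (p : Fin (n + 1)), IsConj (g p) x → (hg x).choose = p :=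
    fun x p h => ((hg x).choose_spec.2 p h).symm
  rw [← Finset.sum_fiberwise Finset.univ (fun x => (hg x).choose) F]
  refine Finset.sum_congr rfl fun p _ => ?_
  have hfil : Finset.univ.filter (fun x : G => (hg x).choose = p) =
      Finset.univ.filter (fun x : G => IsConj (g p) x) := by
    ext x
    simp only [Finset.mem_filter, Finset.mem_univ, true_and]
    constructor
    · rintro rfl; exact hc x
    · exact hcu x p
  rw [hfil]
  have hcard : (Finset.univ.filter (fun x : G => IsConj (g p) x)).card
      = classCard (g p) := by
    rw [classCard, Nat.card_eq_fintype_card, Fintype.card_subtype]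
  calc ∑ x ∈ Finset.univ.filter (fun x : G => IsConj (g p) x), F x
      = ∑ _x ∈ Finset.univ.filter (fun x : G => IsConj (g p) x), F (g p) := by
        refine Finset.sum_congr rfl fun x hx => ?_
        rw [Finset.mem_filter] at hx
        exact hF x (g p) (hx.2.symm)
    _ = _ := by rw [Finset.sum_const, nsmul_eq_mul, hcard]

/-- `det (1 + X • ρ(s))` is a class function. -/
lemma auxDetConj {G : Type} [Group G] {d : ℕ}
    (ρ : G →* Matrix.GeneralLinearGroup (Fin d) ℂ) (x y : G) (h : IsConj x y) :
    Matrix.det ((1 : Matrix (Fin d) (Fin d) ℂ[X]) +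
        (Polynomial.X : ℂ[X]) • ((ρ x : Matrix (Fin d) (Fin d) ℂ)).map Polynomial.C) =
    Matrix.det ((1 : Matrix (Fin d) (Fin d) ℂ[X]) +
        (Polynomial.X : ℂ[X]) • ((ρ y : Matrix (Fin d) (Fin d) ℂ)).map Polynomial.C) := by
  obtain ⟨c, hc⟩ := isConj_iff.mp h
  subst hc
  set U : Matrix (Fin d) (Fin d) ℂ[X] := ((ρ c : Matrix (Fin d) (Fin d) ℂ)).map Polynomial.C
  set V : Matrix (Fin d) (Fin d) ℂ[X] :=
    (((ρ c)⁻¹ : Matrix.GeneralLinearGroup (Fin d) ℂ) : Matrix (Fin d) (Fin d) ℂ).map Polynomial.C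
  set Mx : Matrix (Fin d) (Fin d) ℂ[X] := ((ρ x : Matrix (Fin d) (Fin d) ℂ)).map Polynomial.C
  have hUV : U * V = 1 := by
    rw [← Matrix.map_mul]
    have : (ρ c : Matrix (Fin d) (Fin d) ℂ) *
        (((ρ c)⁻¹ : Matrix.GeneralLinearGroup (Fin d) ℂ) : Matrix (Fin d) (Fin d) ℂ) = 1 := by
      rw [← Matrix.GeneralLinearGroup.coe_mul, mul_inv_cancel]
      rfl
    rw [this, Matrix.map_one _ (map_zero _) (map_one _)]
  have hmap : ((ρ (c * x * c⁻¹) : Matrix (Fin d) (Fin d) ℂ)).map Polynomial.C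
      = U * Mx * V := by
    rw [map_mul ρ, map_mul ρ, map_inv ρ]
    rw [Matrix.GeneralLinearGroup.coe_mul, Matrix.GeneralLinearGroup.coe_mul,
      Matrix.map_mul, Matrix.map_mul]
  rw [hmap]
  have hexp : (1 : Matrix (Fin d) (Fin d) ℂ[X]) + (Polynomial.X : ℂ[X]) • (U * Mx * V)
      = U * ((1 : Matrix (Fin d) (Fin d) ℂ[X]) + (Polynomial.X : ℂ[X]) • Mx) * V := by
    rw [mul_add, add_mul, mul_one, hUV, Matrix.mul_smul, Matrix.smul_mul]
  have hdet1 : U.det * V.det = 1 := by rw [← Matrix.det_mul, hUV, Matrix.det_one]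
  rw [hexp, Matrix.det_mul, Matrix.det_mul, mul_comm U.det, mul_assoc, hdet1, mul_one]

end Aux

theorem stmt2 {G : Type} [Group G] [Fintype G] {n : ℕ}
    (g : Fin (n + 1) → G) (hg1 : g 0 = 1)
    (hg : ∀ x : G, ∃! k : Fin (n + 1), IsConj (g k) x)
    (R : Fin (n + 1) → FDRep ℂ G)
    (hsimple : ∀ i, Simple (R i))
    (htriv : ∀ x : G, (R 0).character x = 1)
    (hdist : ∀ i j, i ≠ j → ¬ Nonempty (R i ≅ R j))
    {d : ℕ} (ρ : G →* Matrix.GeneralLinearGroup (Fin d) ℂ)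
    -- `e m s` : the character of the `m`-th exterior power of `ρ`,
    -- i.e. the coefficient of `q^m` in `det(1 + q·ρ(s))`
    (e : ℕ → G → ℂ)
    (he : ∀ m s, e m s = Polynomial.coeff
      (Matrix.det ((1 : Matrix (Fin d) (Fin d) ℂ[X]) +
        (Polynomial.X : ℂ[X]) • ((ρ s : Matrix (Fin d) (Fin d) ℂ)).map Polynomial.C)) m)
    -- `A` : the graded Clebsch–Gordan matrix of the exterior algebra of `ρ`
    (A : Matrix (Fin (n + 1)) (Fin (n + 1)) ℂ[X])
    (hA : ∀ i j, A i j = ∑ m ∈ Finset.range (d + 1),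
      Polynomial.C (cgIP (fun s => e m s * (R i).character s) ((R j).character)) *
        Polynomial.X ^ m)
    (k : ℕ) (hk1 : 1 ≤ k) (hk2 : k ≤ n + 1)
    (I J : Fin k → Fin (n + 1)) (hI : StrictMono I) (hJ : StrictMono J) :
    (A.submatrix I J).det =
      Polynomial.C ((Fintype.card G : ℂ)⁻¹ ^ k) *
        ∑ P ∈ Finset.univ.filter (fun P : Fin k → Fin (n + 1) => StrictMono P),
          Polynomial.C (Matrix.of fun a b : Fin k => (R (I a)).character (g (P b))).det *
            Polynomial.C ((starRingEnd ℂ)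
              (Matrix.of fun a b : Fin k => (R (J a)).character (g (P b))).det) *
            ∏ m : Fin k, ((classCard (g (P m)) : ℂ[X]) *
              Matrix.det ((1 : Matrix (Fin d) (Fin d) ℂ[X]) + (Polynomial.X : ℂ[X]) •
                ((ρ (g (P m)) : Matrix (Fin d) (Fin d) ℂ)).map Polynomial.C)) := by
  set Dm : G → ℂ[X] := fun s =>
    Matrix.det ((1 : Matrix (Fin d) (Fin d) ℂ[X]) +
      (Polynomial.X : ℂ[X]) • ((ρ s : Matrix (Fin d) (Fin d) ℂ)).map Polynomial.C)
    with hDm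
  set u : ℂ := (Fintype.card G : ℂ)⁻¹ with hu
  -- degree bound
  have hdeg : ∀ s : G, (Dm s).natDegree < d + 1 := by
    intro s
    have h1 := Polynomial.natDegree_det_X_add_C_le
      ((ρ s : Matrix (Fin d) (Fin d) ℂ)) (1 : Matrix (Fin d) (Fin d) ℂ)
    rw [Matrix.map_one _ (map_zero _) (map_one _)] at h1
    have : Dm s = Matrix.det ((Polynomial.X : ℂ[X]) •
        ((ρ s : Matrix (Fin d) (Fin d) ℂ)).map Polynomial.C +
        (1 : Matrix (Fin d) (Fin d) ℂ[X])) := by rw [hDm, add_comm]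
    rw [this]
    simpa using Nat.lt_succ_of_le h1
  -- Dm as a sum of its coefficients
  have hDsum : ∀ s : G, Dm s = ∑ m ∈ Finset.range (d + 1),
      Polynomial.C (e m s) * Polynomial.X ^ m := by
    intro s
    conv_lhs => rw [(Dm s).as_sum_range' (d + 1) (hdeg s)]
    refine Finset.sum_congr rfl fun m _ => ?_
    rw [he m s, Polynomial.C_mul_X_pow_eq_monomial]
  -- entries of A
  have hAentry : ∀ i j, A i j = ∑ p : Fin (n + 1),
      Polynomial.C ((R i).character (g p)) *
        ((Polynomial.C u * (classCard (g p) : ℂ[X]) * Dm (g p)) *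
          Polynomial.C ((starRingEnd ℂ) ((R j).character (g p)))) := by
    intro i j
    have step1 : A i j = ∑ s : G,
        (Polynomial.C u * Polynomial.C ((R i).character s *
          (starRingEnd ℂ) ((R j).character s))) * Dm s := by
      rw [hA i j]
      have : ∀ m ∈ Finset.range (d + 1),
          Polynomial.C (cgIP (fun s => e m s * (R i).character s) ((R j).character)) *
            Polynomial.X ^ m
          = ∑ s : G, (Polynomial.C u * Polynomial.C ((R i).character s *
              (starRingEnd ℂ) ((R j).character s))) * (Polynomial.C (e m s) *
              Polynomial.X ^ m) := by
        intro m _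
        rw [cgIP, map_mul, map_sum, Finset.mul_sum, Finset.sum_mul]
        refine Finset.sum_congr rfl fun s _ => ?_
        rw [map_mul, map_mul, map_mul]
        ring
      rw [Finset.sum_congr rfl this, Finset.sum_comm]
      refine Finset.sum_congr rfl fun s _ => ?_
      rw [← Finset.mul_sum, ← hDsum s]
    rw [step1, auxSumConjClasses g hg _ ?_]
    · refine Finset.sum_congr rfl fun p _ => ?_
      rw [map_mul]
      first
      | (push_cast; ring)
      | push_cast
    · intro x y hxy
      have hchar : ∀ (V : FDRep ℂ G), V.character x = V.character y := by
        intro V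
        obtain ⟨c, hc⟩ := isConj_iff.mp hxy
        rw [← hc, FDRep.char_conj]
      have hD : Dm x = Dm y := auxDetConj ρ x y hxy
      rw [hchar (R i), hchar (R j), hD]
  -- factor A's minor as a product of two rectangular matrices
  set B : Matrix (Fin (n + 1)) (Fin (n + 1)) ℂ[X] :=
    Matrix.of fun i p => Polynomial.C ((R i).character (g p)) with hB
  set Cm : Matrix (Fin (n + 1)) (Fin (n + 1)) ℂ[X] :=
    Matrix.of fun p j => (Polynomial.C u * (classCard (g p) : ℂ[X]) * Dm (g p)) *
      Polynomial.C ((starRingEnd ℂ) ((R j).character (g p))) with hCm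
  have hfact : A.submatrix I J = (B.submatrix I id) * (Cm.submatrix id J) := by
    ext a b
    rw [Matrix.mul_apply, Matrix.submatrix_apply, hAentry]
    rfl
  rw [hfact, auxCauchyBinet, Finset.mul_sum]
  refine Finset.sum_congr rfl fun P hP => ?_
  -- simplify the two minors
  have hsub1 : (B.submatrix I id).submatrix id P = B.submatrix I P := by
    rw [Matrix.submatrix_submatrix]; rfl
  have hsub2 : (Cm.submatrix id J).submatrix P id = Cm.submatrix P J := by
    rw [Matrix.submatrix_submatrix]; rfl
  rw [hsub1, hsub2]
  have hdet1 : (B.submatrix I P).det =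
      Polynomial.C (Matrix.of fun a b : Fin k => (R (I a)).character (g (P b))).det := by
    rw [RingHom.map_det]
    congr 1
  have hdet2 : (Cm.submatrix P J).det =
      (∏ a : Fin k, (Polynomial.C u * (classCard (g (P a)) : ℂ[X]) * Dm (g (P a)))) *
        Polynomial.C ((starRingEnd ℂ)
          (Matrix.of fun a b : Fin k => (R (J a)).character (g (P b))).det) := by
    have h1 : Cm.submatrix P J = Matrix.of (fun a b : Fin k =>
        (Polynomial.C u * (classCard (g (P a)) : ℂ[X]) * Dm (g (P a))) *
          (Matrix.of fun a b : Fin k =>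
            Polynomial.C ((starRingEnd ℂ) ((R (J b)).character (g (P a))))) a b) := by
      ext a b; rfl
    rw [h1, Matrix.det_mul_column]
    congr 1
    rw [← Matrix.det_transpose, RingHom.map_det, RingHom.map_det]
    congr 1
  rw [hdet1, hdet2]
  have hprod : (∏ a : Fin k, (Polynomial.C u * (classCard (g (P a)) : ℂ[X]) * Dm (g (P a))))
      = Polynomial.C (u ^ k) * ∏ a : Fin k, ((classCard (g (P a)) : ℂ[X]) * Dm (g (P a))) := by
    rw [Finset.prod_mul_distrib, Finset.prod_mul_distrib, Finset.prod_mul_distrib,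
      Finset.prod_const, Finset.card_univ, Fintype.card_fin, map_pow, mul_assoc]
  rw [hprod]
  ring
end

section
/- Let ρ: G → GL_d(ℂ) be a representation with character χ_ρ, and for m ≥ 0 let ψ_m: G → ℂ be the class function ψ_m(g) = χ_ρ(g^m) (the character of the m-th Adams operation applied to ρ; ψ_0(g) = d). Let P(q) be the (n+1)×(n+1) matrix over ℂ[[q]] with entries P(q)^i_j = Σ_{m≥0} q^m · ⟨ψ_m·χ_i, χ_j⟩. Then for any 1 ≤ k ≤ n+1 and strictly increasing tuples 0 ≤ i_1 < … < i_k ≤ n, 0 ≤ j_1 < … < j_k ≤ n, the corresponding k×k minor of P(q) equals, in ℂ[[q]], (1/|G|^k) · Σ_{0 ≤ p_1 < … < p_k ≤ n} det(χ_{i_a}(g_{p_b})) · conj( det(χ_{j_a}(g_{p_b})) ) · Π_{m=1}^k |C_{p_m}|· ( Σ_{m≥0} q^m · trace(ρ(g_{p_m})^m) ). -/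
open CategoryTheory
open scoped Classical

open Finset Equiv Equiv.Perm in
/-- Cauchy–Binet formula. -/
lemma cauchyBinetAux {R : Type*} [CommRing R] {k : ℕ} {N : Type*} [Fintype N] [DecidableEq N]
    [LinearOrder N] (A : Matrix (Fin k) N R) (B : Matrix N (Fin k) R) :
    (A * B).det = ∑ Q ∈ Finset.univ.filter (fun Q : Fin k → N => StrictMono Q),
      (A.submatrix id Q).det * (B.submatrix Q id).det := by
  classical
  have step1 : (A * B).det = ∑ f : Fin k → N, (∏ i, B (f i) i) * (A.submatrix id f).det := by
    simp only [Matrix.det_apply', Matrix.mul_apply, Matrix.submatrix_apply, id_eq,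
      Finset.prod_univ_sum, Fintype.piFinset_univ, Finset.mul_sum]
    rw [Finset.sum_comm]
    refine Finset.sum_congr rfl fun f _ => Finset.sum_congr rfl fun σ _ => ?_
    rw [Finset.prod_mul_distrib]
    ring
  rw [step1]
  rw [← Finset.sum_subset (Finset.filter_subset (fun f : Fin k → N => Function.Injective f)
      Finset.univ) (fun f _ hf => ?_)]
  swap
  · have hfinj : ¬ Function.Injective f := by simpa using hf
    rw [Function.Injective] at hfinj
    push_neg at hfinj
    obtain ⟨i, j, hij, hne⟩ := hfinj
    have : (A.submatrix id f).det = 0 := by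
      refine Matrix.det_zero_of_column_eq hne fun r => ?_
      simp [hij]
    rw [this, mul_zero]
  have hRHS : ∀ Q : Fin k → N, (B.submatrix Q id).det
      = ∑ σ : Perm (Fin k), ((Equiv.Perm.sign σ : ℤ) : R) * ∏ i, B (Q (σ i)) i := by
    intro Q
    simp [Matrix.det_apply']
  rw [Finset.sum_congr rfl (fun Q _ => by rw [hRHS, Finset.mul_sum] :
    ∀ Q ∈ Finset.univ.filter (fun Q : Fin k → N => StrictMono Q), _ = ∑ σ : Perm (Fin k),
      (A.submatrix id Q).det * (((Equiv.Perm.sign σ : ℤ) : R) * ∏ i, B (Q (σ i)) i))]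
  rw [← Finset.sum_product']
  refine (Finset.sum_bij (fun (x : (Fin k → N) × Perm (Fin k)) _ => x.1 ∘ ⇑x.2) ?_ ?_ ?_ ?_).symm
  · rintro ⟨Q, σ⟩ hx
    have hQ : StrictMono Q := by
      simp only [Finset.mem_product, Finset.mem_filter] at hx
      exact hx.1.2
    simpa using hQ.injective.comp σ.injective
  · rintro ⟨Q₁, σ₁⟩ h₁ ⟨Q₂, σ₂⟩ h₂ heq
    simp only [Finset.mem_product, Finset.mem_filter, Finset.mem_univ, true_and,
      and_true] at h₁ h₂
    dsimp only at heq
    have himg : ∀ (Q : Fin k → N) (σ : Perm (Fin k)),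
        Finset.image (Q ∘ ⇑σ) Finset.univ = Finset.image Q Finset.univ := by
      intro Q σ
      rw [← Finset.image_image, Finset.image_univ_equiv]
    have himg12 : Finset.image Q₁ Finset.univ = Finset.image Q₂ Finset.univ := by
      rw [← himg Q₁ σ₁, ← himg Q₂ σ₂, heq]
    have hcard : (Finset.image Q₁ Finset.univ).card = k := by
      rw [Finset.card_image_of_injective _ h₁.injective, Finset.card_univ, Fintype.card_fin]
    have hQ1 : Q₁ = ⇑((Finset.image Q₁ Finset.univ).orderEmbOfFin hcard) :=
      Finset.orderEmbOfFin_unique hcard (fun x => Finset.mem_image_of_mem _ (Finset.mem_univ x))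
        h₁
    have hQ2 : Q₂ = ⇑((Finset.image Q₁ Finset.univ).orderEmbOfFin hcard) :=
      Finset.orderEmbOfFin_unique hcard (fun x => himg12 ▸
        Finset.mem_image_of_mem _ (Finset.mem_univ x)) h₂
    have hQQ : Q₁ = Q₂ := hQ1.trans hQ2.symm
    subst hQQ
    have hσ : σ₁ = σ₂ := Equiv.ext fun i => h₁.injective (congrFun heq i)
    rw [hσ]
  · intro b hb
    have hbinj : Function.Injective b := by simpa using hb
    set s : Finset N := Finset.image b Finset.univ with hs
    have hcard : s.card = k := by
      rw [hs, Finset.card_image_of_injective _ hbinj, Finset.card_univ, Fintype.card_fin]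
    set Q : Fin k → N := ⇑(s.orderEmbOfFin hcard) with hQdef
    have hQ : StrictMono Q := (s.orderEmbOfFin hcard).strictMono
    have hbij : Function.Bijective (fun i : Fin k => (⟨b i,
        Finset.mem_image_of_mem _ (Finset.mem_univ i)⟩ : s)) := by
      rw [Fintype.bijective_iff_injective_and_card]
      constructor
      · intro i j hij
        exact hbinj (congrArg Subtype.val hij)
      · rw [Fintype.card_coe, hcard, Fintype.card_fin]
    refine ⟨⟨Q, (Equiv.ofBijective _ hbij).trans (s.orderIsoOfFin hcard).toEquiv.symm⟩, ?_, ?_⟩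
    · simp only [Finset.mem_product, Finset.mem_filter, Finset.mem_univ, true_and, and_true]
      exact hQ
    · funext i
      simp only [Function.comp_apply, Equiv.trans_apply]
      rw [hQdef, ← Finset.coe_orderIsoOfFin_apply]
      simp
  · rintro ⟨Q, σ⟩ hx
    simp only [Finset.mem_product, Finset.mem_filter, Finset.mem_univ, true_and, and_true] at hx
    have hsub : A.submatrix id (Q ∘ ⇑σ) = (A.submatrix id Q).submatrix id ⇑σ := by
      simp [Matrix.submatrix_submatrix]
    show _ = (∏ i, B ((Q ∘ ⇑σ) i) i) * (A.submatrix id (Q ∘ ⇑σ)).det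
    rw [hsub, Matrix.det_permute']
    simp only [Function.comp_apply]
    ring

/-- Summing a class function over the group equals a weighted sum over classes. -/
lemma sum_classesAux {G : Type} [Group G] [Fintype G] {n : ℕ}
    (g : Fin (n + 1) → G)
    (hg : ∀ x : G, ∃! k : Fin (n + 1), IsConj (g k) x)
    (h : G → ℂ) (hcl : ∀ x y : G, IsConj x y → h x = h y) :
    ∑ x : G, h x = ∑ p : Fin (n + 1), (classCard (g p) : ℂ) * h (g p) := by
  classical
  set φ : G → Fin (n + 1) := fun x => (hg x).choose with hφ
  have hφ1 : ∀ x, IsConj (g (φ x)) x := fun x => (hg x).choose_spec.1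
  have hφ2 : ∀ x p, IsConj (g p) x → φ x = p := fun x p hp =>
    ((hg x).choose_spec.2 p hp).symm
  rw [← Finset.sum_fiberwise_of_maps_to (g := φ) (fun x _ => Finset.mem_univ (φ x)) h]
  refine Finset.sum_congr rfl fun p _ => ?_
  have hfib : Finset.univ.filter (fun x => φ x = p)
      = Finset.univ.filter (fun x => IsConj (g p) x) := by
    ext x
    simp only [Finset.mem_filter, Finset.mem_univ, true_and]
    exact ⟨fun hx => hx ▸ hφ1 x, fun hx => hφ2 x p hx⟩
  rw [hfib]
  have hval : ∀ x ∈ Finset.univ.filter (fun x => IsConj (g p) x), h x = h (g p) := by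
    intro x hx
    simp only [Finset.mem_filter, Finset.mem_univ, true_and] at hx
    exact (hcl (g p) x hx).symm
  rw [Finset.sum_congr rfl hval, Finset.sum_const, nsmul_eq_mul]
  congr 1
  rw [classCard, Nat.card_eq_fintype_card, Fintype.card_subtype]

theorem stmt5 {G : Type} [Group G] [Fintype G] {n : ℕ}
    (g : Fin (n + 1) → G) (hg1 : g 0 = 1)
    (hg : ∀ x : G, ∃! k : Fin (n + 1), IsConj (g k) x)
    (R : Fin (n + 1) → FDRep ℂ G)
    (hsimple : ∀ i, Simple (R i))
    (htriv : ∀ x : G, (R 0).character x = 1)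
    (hdist : ∀ i j, i ≠ j → ¬ Nonempty (R i ≅ R j))
    {d : ℕ} (ρ : G →* Matrix.GeneralLinearGroup (Fin d) ℂ)
    -- `ψ m` : the character of the `m`-th Adams operation applied to `ρ`
    (ψ : ℕ → G → ℂ)
    (hψ : ∀ m s, ψ m s = Matrix.trace (ρ (s ^ m) : Matrix (Fin d) (Fin d) ℂ))
    -- `P` : the graded Clebsch–Gordan matrix of the Adams operations of `ρ`
    (P : Matrix (Fin (n + 1)) (Fin (n + 1)) (PowerSeries ℂ))
    (hP : ∀ i j, P i j =
      PowerSeries.mk fun m => cgIP (fun s => ψ m s * (R i).character s) ((R j).character))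
    (k : ℕ) (hk1 : 1 ≤ k) (hk2 : k ≤ n + 1)
    (I J : Fin k → Fin (n + 1)) (hI : StrictMono I) (hJ : StrictMono J) :
    (P.submatrix I J).det =
      (PowerSeries.C : ℂ →+* PowerSeries ℂ) ((Fintype.card G : ℂ)⁻¹ ^ k) *
        ∑ Q ∈ Finset.univ.filter (fun Q : Fin k → Fin (n + 1) => StrictMono Q),
          (PowerSeries.C : ℂ →+* PowerSeries ℂ) (Matrix.of fun a b : Fin k => (R (I a)).character (g (Q b))).det *
            (PowerSeries.C : ℂ →+* PowerSeries ℂ) ((starRingEnd ℂ)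
              (Matrix.of fun a b : Fin k => (R (J a)).character (g (Q b))).det) *
            ∏ m : Fin k, ((classCard (g (Q m)) : PowerSeries ℂ) *
              PowerSeries.mk fun m' =>
                Matrix.trace ((ρ (g (Q m)) : Matrix (Fin d) (Fin d) ℂ) ^ m')) := by
  classical
  set F : Fin (n + 1) → PowerSeries ℂ := fun p =>
    PowerSeries.mk fun m' => Matrix.trace ((ρ (g p) : Matrix (Fin d) (Fin d) ℂ) ^ m') with hF
  set A : Matrix (Fin k) (Fin (n + 1)) (PowerSeries ℂ) :=
    Matrix.of fun a p => (PowerSeries.C : ℂ →+* PowerSeries ℂ) ((R (I a)).character (g p)) with hA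
  set B : Matrix (Fin (n + 1)) (Fin k) (PowerSeries ℂ) :=
    Matrix.of fun p b => (PowerSeries.C : ℂ →+* PowerSeries ℂ) ((Fintype.card G : ℂ)⁻¹ *
        (starRingEnd ℂ) ((R (J b)).character (g p))) *
      ((classCard (g p) : PowerSeries ℂ) * F p) with hB
  -- key factorization
  have hAB : P.submatrix I J = A * B := by
    ext a b m
    rw [Matrix.mul_apply, Matrix.submatrix_apply, hP, PowerSeries.coeff_mk, map_sum]
    -- compute the coefficient of each summand on the right
    have hcoeff : ∀ p : Fin (n + 1), (PowerSeries.coeff m) (A a p * B p b) =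
        (R (I a)).character (g p) * ((Fintype.card G : ℂ)⁻¹ *
          (starRingEnd ℂ) ((R (J b)).character (g p)) *
          ((classCard (g p) : ℂ) *
            Matrix.trace ((ρ (g p) : Matrix (Fin d) (Fin d) ℂ) ^ m))) := by
      intro p
      rw [hA, hB, hF]
      simp only [Matrix.of_apply]
      rw [← map_natCast ((PowerSeries.C : ℂ →+* PowerSeries ℂ)) (classCard (g p)), mul_assoc,
        PowerSeries.coeff_C_mul, PowerSeries.coeff_C_mul, PowerSeries.coeff_C_mul,
        PowerSeries.coeff_mk]
      ring
    rw [Finset.sum_congr rfl fun p _ => hcoeff p]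
    -- compute the left side : group the class function sum over conjugacy classes
    rw [cgIP]
    have hcl : ∀ x y : G, IsConj x y →
        ψ m x * (R (I a)).character x * (starRingEnd ℂ) ((R (J b)).character x)
          = ψ m y * (R (I a)).character y * (starRingEnd ℂ) ((R (J b)).character y) := by
      intro x y hxy
      rw [isConj_iff] at hxy
      obtain ⟨c, rfl⟩ := hxy
      rw [FDRep.char_conj, FDRep.char_conj]
      congr 2
      rw [hψ, hψ]
      have hpow : (c * x * c⁻¹) ^ m = c * x ^ m * c⁻¹ := by
        have := map_pow (MulAut.conj c) x m
        simpa [MulAut.conj_apply] using this.symm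
      rw [hpow, map_mul, map_mul]
      have hone : ((ρ c⁻¹ : Matrix (Fin d) (Fin d) ℂ)) * (ρ c : Matrix (Fin d) (Fin d) ℂ)
          = 1 := by
        rw [← Units.val_mul, ← map_mul, inv_mul_cancel, map_one, Units.val_one]
      rw [Units.val_mul, Units.val_mul, Matrix.trace_mul_comm, ← mul_assoc, hone, one_mul]
    rw [sum_classesAux g hg _ hcl]
    rw [Finset.mul_sum]
    refine Finset.sum_congr rfl fun p _ => ?_
    rw [hψ]
    have : (ρ (g p ^ m) : Matrix (Fin d) (Fin d) ℂ)
        = (ρ (g p) : Matrix (Fin d) (Fin d) ℂ) ^ m := by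
      rw [map_pow, Units.val_pow_eq_pow_val]
    rw [this]
    ring
  rw [hAB, cauchyBinetAux, Finset.mul_sum]
  refine Finset.sum_congr rfl fun Q hQ => ?_
  -- LHS determinant factors
  have hAdet : (A.submatrix id Q).det =
      (PowerSeries.C : ℂ →+* PowerSeries ℂ) (Matrix.of fun a b : Fin k => (R (I a)).character (g (Q b))).det := by
    have : A.submatrix id Q =
        (Matrix.of fun a b : Fin k => (R (I a)).character (g (Q b))).map ((PowerSeries.C : ℂ →+* PowerSeries ℂ)) := by
      ext a b
      simp [hA, Matrix.map_apply]
    rw [this]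
    rw [show (Matrix.of fun a b : Fin k => (R (I a)).character (g (Q b))).map ((PowerSeries.C : ℂ →+* PowerSeries ℂ))
        = ((PowerSeries.C : ℂ →+* PowerSeries ℂ)).mapMatrix (Matrix.of fun a b : Fin k => (R (I a)).character (g (Q b)))
      from rfl, ← RingHom.map_det]
  have hBdet : (B.submatrix Q id).det =
      (∏ a : Fin k, ((classCard (g (Q a)) : PowerSeries ℂ) * F (Q a))) *
        (PowerSeries.C : ℂ →+* PowerSeries ℂ) ((Fintype.card G : ℂ)⁻¹ ^ k *
          (starRingEnd ℂ) (Matrix.of fun a b : Fin k => (R (J a)).character (g (Q b))).det) := by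
    have hform : B.submatrix Q id = Matrix.of fun a b : Fin k =>
        ((classCard (g (Q a)) : PowerSeries ℂ) * F (Q a)) *
          ((Matrix.of fun a b : Fin k => (Fintype.card G : ℂ)⁻¹ *
            (starRingEnd ℂ) ((R (J b)).character (g (Q a)))).map ((PowerSeries.C : ℂ →+* PowerSeries ℂ))) a b := by
      ext a b
      simp only [hB, Matrix.submatrix_apply, Matrix.of_apply, Matrix.map_apply, id_eq]
      ring
    rw [hform, Matrix.det_mul_column]
    rw [show (Matrix.of fun a b : Fin k => (Fintype.card G : ℂ)⁻¹ *
          (starRingEnd ℂ) ((R (J b)).character (g (Q a)))).map ((PowerSeries.C : ℂ →+* PowerSeries ℂ))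
        = ((PowerSeries.C : ℂ →+* PowerSeries ℂ)).mapMatrix (Matrix.of fun a b : Fin k => (Fintype.card G : ℂ)⁻¹ *
          (starRingEnd ℂ) ((R (J b)).character (g (Q a)))) from rfl, ← RingHom.map_det]
    congr 1
    -- determinant over ℂ
    have hform2 : (Matrix.of fun a b : Fin k => (Fintype.card G : ℂ)⁻¹ *
        (starRingEnd ℂ) ((R (J b)).character (g (Q a)))) = Matrix.of fun a b : Fin k =>
        (fun _ : Fin k => (Fintype.card G : ℂ)⁻¹) a *
          (((Matrix.of fun a b : Fin k => (R (J a)).character (g (Q b))).transpose.map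
            (starRingEnd ℂ)) a b) := by
      ext a b
      simp [Matrix.map_apply, Matrix.transpose_apply]
    rw [hform2, Matrix.det_mul_column]
    rw [show (Matrix.of fun a b : Fin k => (R (J a)).character (g (Q b))).transpose.map
          (starRingEnd ℂ)
        = (starRingEnd ℂ).mapMatrix ((Matrix.of fun a b : Fin k =>
          (R (J a)).character (g (Q b))).transpose) from rfl, ← RingHom.map_det,
      Matrix.det_transpose]
    congr 1
    rw [Finset.prod_const, Finset.card_univ, Fintype.card_fin]
  rw [hAdet, hBdet, map_mul]
  ring
end

section
/- Let ρ: G → GL_d(ℂ) be a representation and let S(q) be the Molien matrix over the field ℂ(q) of rational functions, with entries S(q)^i_j = (1/|G|) Σ_{k=0}^n |C_k|·χ_i(g_k)·conj(χ_j(g_k)) / det(1 − q·ρ(g_k)). Then for all 0 ≤ i, j ≤ n one has S(q)^i_j = Σ_{k=0}^n ⟨χ_i·χ_k, χ_j⟩ · S(q)^0_k, i.e., every row of the Molien matrix is obtained from its 0-th row (indexed by the trivial representation) by multiplication with the integer Clebsch–Gordan matrix M[R_i]. -/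
open CategoryTheory
open scoped Classical

/-- `det(1 − q·ρ(g))` as an element of the field `ℂ(q)` of rational functions. -/
noncomputable def molienDetRat {G : Type} [Group G] {d : ℕ}
    (ρ : G →* Matrix.GeneralLinearGroup (Fin d) ℂ) (s : G) : RatFunc ℂ :=
  Matrix.det ((1 : Matrix (Fin d) (Fin d) (RatFunc ℂ)) -
    ((ρ s : Matrix (Fin d) (Fin d) ℂ)).map fun a => RatFunc.X * RatFunc.C a)

section Aux

set_option maxHeartbeats 1600000

open Matrix in
open scoped ComplexOrder in
lemma aux_trace_pow_pred {d N : ℕ} (M : Matrix (Fin d) (Fin d) ℂ) (hN : N ≠ 0)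
    (hM : M ^ N = 1) : (M ^ (N - 1)).trace = (starRingEnd ℂ) M.trace := by
  classical
  set f : ℕ → Matrix (Fin d) (Fin d) ℂ := fun j => (M ^ j)ᴴ * (M ^ j) with hf
  set P : Matrix (Fin d) (Fin d) ℂ := ∑ j ∈ Finset.range N, f j with hP
  obtain ⟨N', rfl⟩ : ∃ N', N = N' + 1 :=
    ⟨N - 1, (Nat.succ_pred_eq_of_pos (Nat.pos_of_ne_zero hN)).symm⟩
  have hQ : (∑ j ∈ Finset.range N', f (j + 1)).PosSemidef := by
    refine Finset.sum_induction (fun j => f (j+1)) Matrix.PosSemidef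
      (fun a b ha hb => ha.add hb) Matrix.PosSemidef.zero
      (fun j _ => Matrix.posSemidef_conjTranspose_mul_self _)
  have hPpos : P.PosDef := by
    rw [hP, Finset.sum_range_succ']
    have : f 0 = 1 := by simp [hf]
    rw [this]
    exact Matrix.PosDef.posSemidef_add hQ Matrix.PosDef.one
  have hshift : Mᴴ * P * M = P := by
    have h1 : Mᴴ * P * M = ∑ j ∈ Finset.range (N' + 1), f (j + 1) := by
      rw [hP, Finset.mul_sum, Finset.sum_mul]
      refine Finset.sum_congr rfl fun j _ => ?_
      have hct : (M ^ (j+1))ᴴ = Mᴴ * (M ^ j)ᴴ := by rw [pow_succ, Matrix.conjTranspose_mul]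
      show Mᴴ * f j * M = f (j + 1)
      rw [hf]; dsimp only; rw [hct, pow_succ]
      simp only [Matrix.mul_assoc]
    have h2 : f (N' + 1) = f 0 := by
      rw [hf]; dsimp only; rw [hM]; simp
    rw [h1, Finset.sum_range_succ, h2, ← Finset.sum_range_succ', hP]
  have hPunit : IsUnit P.det := hPpos.isUnit.map Matrix.detMonoidHom
  have hMinv : M * M ^ N' = 1 := by rw [← pow_succ', hM]
  have key : Mᴴ * P = P * M ^ N' := by
    calc Mᴴ * P = Mᴴ * P * (M * M ^ N') := by rw [hMinv, Matrix.mul_one]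
    _ = (Mᴴ * P * M) * M ^ N' := by rw [Matrix.mul_assoc (Mᴴ * P)]
    _ = P * M ^ N' := by rw [hshift]
  have hH : Mᴴ = P * M ^ N' * P⁻¹ := by
    rw [← key, Matrix.mul_assoc, Matrix.mul_nonsing_inv _ hPunit, Matrix.mul_one]
  have htr : Mᴴ.trace = (M ^ N').trace := by
    rw [hH, Matrix.trace_mul_cycle, Matrix.nonsing_inv_mul _ hPunit, Matrix.one_mul]
  simpa [Matrix.trace_conjTranspose] using htr.symm

lemma aux_char_inv {G : Type} [Group G] [Fintype G] (V : FDRep ℂ G) (g : G) :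
    V.character g⁻¹ = (starRingEnd ℂ) (V.character g) := by
  classical
  let b := Module.finBasis ℂ V
  let e := LinearMap.toMatrixAlgEquiv b
  have hN : (Fintype.card G) ≠ 0 := Fintype.card_ne_zero
  have hgN : g ^ Fintype.card G = 1 := pow_card_eq_one
  have hgi : g⁻¹ = g ^ (Fintype.card G - 1) := by
    refine (eq_inv_of_mul_eq_one_left ?_).symm
    rw [← pow_succ, Nat.sub_add_cancel (Nat.pos_of_ne_zero hN), hgN]
  have hMpow : (e (V.ρ g)) ^ Fintype.card G = 1 := by
    rw [← map_pow, ← map_pow, hgN, map_one, map_one]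
  have htr : ∀ x : G, V.character x = (e (V.ρ x)).trace := fun x =>
    LinearMap.trace_eq_matrix_trace ℂ b (V.ρ x)
  rw [htr, htr, hgi, map_pow, map_pow]
  exact aux_trace_pow_pred _ hN hMpow

lemma aux_class_sum {G : Type} [Group G] [Fintype G] {n : ℕ} (g : Fin (n+1) → G)
    (hg : ∀ x : G, ∃! k : Fin (n + 1), IsConj (g k) x) (F : G → ℂ)
    (hF : ∀ x y : G, IsConj x y → F x = F y) :
    ∑ x : G, F x = ∑ k : Fin (n+1), (classCard (g k) : ℂ) * F (g k) := by
  classical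
  have h := (Fintype.sum_fiberwise (fun x : G => (hg x).choose) F).symm
  rw [h]
  refine Finset.sum_congr rfl fun k _ => ?_
  have hiff : ∀ x : G, (hg x).choose = k ↔ IsConj (g k) x := by
    intro x
    constructor
    · rintro rfl; exact (hg x).choose_spec.1
    · intro hx; exact ((hg x).choose_spec.2 k hx).symm
  have hcard : classCard (g k) = Fintype.card {x : G // (hg x).choose = k} := by
    rw [classCard, Nat.card_eq_fintype_card]
    exact Fintype.card_congr (Equiv.subtypeEquivRight fun x => (hiff x).symm)
  have hval : ∀ x : {x : G // (hg x).choose = k}, F (x : G) = F (g k) := by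
    rintro ⟨x, hx⟩
    exact (hF (g k) x ((hiff x).mp hx)).symm
  calc ∑ x : {x : G // (hg x).choose = k}, F (x : G)
      = ∑ _x : {x : G // (hg x).choose = k}, F (g k) := Finset.sum_congr rfl fun x _ => hval x
    _ = (classCard (g k) : ℂ) * F (g k) := by
        rw [Finset.sum_const, hcard]; simp [nsmul_eq_mul]

lemma aux_char_isClassFun {G : Type} [Group G] (V : FDRep ℂ G) (x y : G)
    (h : IsConj x y) : V.character x = V.character y := by
  rw [isConj_iff] at h
  obtain ⟨c, rfl⟩ := h
  exact (FDRep.char_conj V x c).symm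

lemma aux_classCard_ne_zero {G : Type} [Group G] [Fintype G] (x : G) :
    (classCard x : ℂ) ≠ 0 := by
  rw [Nat.cast_ne_zero, classCard]
  haveI : Nonempty {y : G // IsConj x y} := ⟨⟨x, IsConj.refl x⟩⟩
  exact Nat.card_pos.ne'

lemma aux_row_orth {G : Type} [Group G] [Fintype G] {n : ℕ}
    (R : Fin (n + 1) → FDRep ℂ G) (hsimple : ∀ i, Simple (R i))
    (hdist : ∀ i j, i ≠ j → ¬ Nonempty (R i ≅ R j)) (i j : Fin (n+1)) :
    ∑ x : G, (R i).character x * (starRingEnd ℂ) ((R j).character x)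
      = if i = j then (Fintype.card G : ℂ) else 0 := by
  haveI := hsimple i
  haveI := hsimple j
  haveI : Invertible ((Nat.card G : ℂ)) :=
    invertibleOfNonzero (by rw [Nat.card_eq_fintype_card]; exact Nat.cast_ne_zero.mpr Fintype.card_ne_zero)
  have h := FDRep.char_orthonormal (k := ℂ) (R i) (R j)
  have h2 : ∑ x : G, (R i).character x * (starRingEnd ℂ) ((R j).character x)
      = ∑ x : G, (R i).character x * (R j).character x⁻¹ := by
    refine Finset.sum_congr rfl fun x _ => ?_
    rw [aux_char_inv]
  rw [h2]
  have hc : (Fintype.card G : ℂ) ≠ 0 := Nat.cast_ne_zero.mpr Fintype.card_ne_zero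
  have h' : (Fintype.card G : ℂ)⁻¹ * ∑ x : G, (R i).character x * (R j).character x⁻¹
      = if Nonempty (R i ≅ R j) then 1 else 0 := by
    rw [Nat.card_eq_fintype_card] at h
    exact h
  rw [inv_mul_eq_iff_eq_mul₀ hc] at h'
  rw [h']
  by_cases hij : i = j
  · subst hij
    simp [if_pos (Nonempty.intro (Iso.refl (R i)))]
  · rw [if_neg (hdist i j hij), if_neg hij]
    simp

lemma aux_row_orth_class {G : Type} [Group G] [Fintype G] {n : ℕ} (g : Fin (n+1) → G)
    (hg : ∀ x : G, ∃! k : Fin (n + 1), IsConj (g k) x)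
    (R : Fin (n + 1) → FDRep ℂ G) (hsimple : ∀ i, Simple (R i))
    (hdist : ∀ i j, i ≠ j → ¬ Nonempty (R i ≅ R j)) (i j : Fin (n+1)) :
    ∑ k : Fin (n+1), (classCard (g k) : ℂ) *
        ((R i).character (g k) * (starRingEnd ℂ) ((R j).character (g k)))
      = if i = j then (Fintype.card G : ℂ) else 0 := by
  have h1 := aux_class_sum g hg
    (fun x => (R i).character x * (starRingEnd ℂ) ((R j).character x))
    (fun x y hxy => by
      simp only [aux_char_isClassFun (R i) x y hxy, aux_char_isClassFun (R j) x y hxy])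
  exact h1.symm.trans (aux_row_orth R hsimple hdist i j)

lemma aux_col_orth {G : Type} [Group G] [Fintype G] {n : ℕ} (g : Fin (n+1) → G)
    (hg : ∀ x : G, ∃! k : Fin (n + 1), IsConj (g k) x)
    (R : Fin (n + 1) → FDRep ℂ G) (hsimple : ∀ i, Simple (R i))
    (hdist : ∀ i j, i ≠ j → ¬ Nonempty (R i ≅ R j)) (m p : Fin (n+1)) :
    ∑ k : Fin (n+1), (R k).character (g p) * (starRingEnd ℂ) ((R k).character (g m))
      = if m = p then (Fintype.card G : ℂ) / (classCard (g m) : ℂ) else 0 := by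
  classical
  have hc : (Fintype.card G : ℂ) ≠ 0 := Nat.cast_ne_zero.mpr Fintype.card_ne_zero
  set U : Matrix (Fin (n+1)) (Fin (n+1)) ℂ :=
    Matrix.of fun i k => (R i).character (g k) with hU
  set W : Matrix (Fin (n+1)) (Fin (n+1)) ℂ :=
    Matrix.of fun k j => (classCard (g k) : ℂ) / (Fintype.card G : ℂ) *
      (starRingEnd ℂ) ((R j).character (g k)) with hW
  have hUW : U * W = 1 := by
    ext i j
    rw [Matrix.mul_apply, Matrix.one_apply]
    have : ∀ k : Fin (n+1), U i k * W k j = (Fintype.card G : ℂ)⁻¹ *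
        ((classCard (g k) : ℂ) *
          ((R i).character (g k) * (starRingEnd ℂ) ((R j).character (g k)))) := by
      intro k
      rw [hU, hW]
      simp only [Matrix.of_apply]
      field_simp
    rw [Finset.sum_congr rfl fun k _ => this k, ← Finset.mul_sum,
      aux_row_orth_class g hg R hsimple hdist i j]
    by_cases hij : i = j
    · rw [if_pos hij, if_pos hij, inv_mul_cancel₀ hc]
    · rw [if_neg hij, if_neg hij, mul_zero]
  have hWU : W * U = 1 := mul_eq_one_comm.mp hUW
  have h2 : (W * U) m p = (1 : Matrix (Fin (n+1)) (Fin (n+1)) ℂ) m p := by rw [hWU]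
  rw [Matrix.mul_apply, Matrix.one_apply] at h2
  have h3 : ∑ k : Fin (n+1), W m k * U k p = (classCard (g m) : ℂ) / (Fintype.card G : ℂ) *
      ∑ k : Fin (n+1), (R k).character (g p) * (starRingEnd ℂ) ((R k).character (g m)) := by
    rw [Finset.mul_sum]
    refine Finset.sum_congr rfl fun k _ => ?_
    rw [hU, hW]
    simp only [Matrix.of_apply]
    ring
  rw [h3] at h2
  have hcm : (classCard (g m) : ℂ) ≠ 0 := aux_classCard_ne_zero (g m)
  by_cases hmp : m = p
  · rw [if_pos hmp] at h2 ⊢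
    field_simp [hc] at h2
    rw [eq_div_iff hcm]
    linear_combination h2
  · rw [if_neg hmp] at h2 ⊢
    have hfac : (classCard (g m) : ℂ) / (Fintype.card G : ℂ) ≠ 0 := div_ne_zero hcm hc
    exact (mul_eq_zero.mp h2).resolve_left hfac
  
end Aux

theorem stmt7 {G : Type} [Group G] [Fintype G] {n : ℕ}
    (g : Fin (n + 1) → G) (hg1 : g 0 = 1)
    (hg : ∀ x : G, ∃! k : Fin (n + 1), IsConj (g k) x)
    (R : Fin (n + 1) → FDRep ℂ G)
    (hsimple : ∀ i, Simple (R i))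
    (htriv : ∀ x : G, (R 0).character x = 1)
    (hdist : ∀ i j, i ≠ j → ¬ Nonempty (R i ≅ R j))
    {d : ℕ} (ρ : G →* Matrix.GeneralLinearGroup (Fin d) ℂ)
    -- `S` : the Molien matrix of `ρ`
    (S : Fin (n + 1) → Fin (n + 1) → RatFunc ℂ)
    (hS : ∀ i j, S i j =
      RatFunc.C ((Fintype.card G : ℂ)⁻¹) *
        ∑ k : Fin (n + 1), (classCard (g k) : RatFunc ℂ) *
          RatFunc.C ((R i).character (g k)) *
          RatFunc.C ((starRingEnd ℂ) ((R j).character (g k))) / molienDetRat ρ (g k)) :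
    ∀ i j : Fin (n + 1),
      S i j = ∑ k : Fin (n + 1),
        RatFunc.C (cgIP ((R i).character * (R k).character) ((R j).character)) * S 0 k := by
  classical
  intro i j
  have hc : (Fintype.card G : ℂ) ≠ 0 := Nat.cast_ne_zero.mpr Fintype.card_ne_zero
  set a : Fin (n+1) → ℂ :=
    fun k => cgIP ((R i).character * (R k).character) ((R j).character) with ha
  -- the scalar key identity
  have hkey : ∀ m : Fin (n+1),
      ∑ k : Fin (n+1), a k * (starRingEnd ℂ) ((R k).character (g m))
        = (R i).character (g m) * (starRingEnd ℂ) ((R j).character (g m)) := by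
    intro m
    have hcm : (classCard (g m) : ℂ) ≠ 0 := aux_classCard_ne_zero (g m)
    have hip : ∀ k, a k
        = (Fintype.card G : ℂ)⁻¹ * ∑ p : Fin (n+1), (classCard (g p) : ℂ) *
            ((R i).character (g p) * (R k).character (g p) *
              (starRingEnd ℂ) ((R j).character (g p))) := by
      intro k
      rw [ha]
      dsimp only
      rw [cgIP]
      congr 1
      exact aux_class_sum g hg (fun x => (R i).character x * (R k).character x *
          (starRingEnd ℂ) ((R j).character x)) (fun x y hxy => by
            simp only [aux_char_isClassFun (R i) x y hxy, aux_char_isClassFun (R k) x y hxy,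
              aux_char_isClassFun (R j) x y hxy])
    calc ∑ k : Fin (n+1), a k * (starRingEnd ℂ) ((R k).character (g m))
        = (Fintype.card G : ℂ)⁻¹ * ∑ k : Fin (n+1), ∑ p : Fin (n+1),
            ((classCard (g p) : ℂ) *
              ((R i).character (g p) * (R k).character (g p) *
                (starRingEnd ℂ) ((R j).character (g p)))) *
              (starRingEnd ℂ) ((R k).character (g m)) := by
          rw [Finset.mul_sum]
          refine Finset.sum_congr rfl fun k _ => ?_
          rw [hip k, mul_assoc, ← Finset.sum_mul]
      _ = (Fintype.card G : ℂ)⁻¹ * ∑ p : Fin (n+1), ∑ k : Fin (n+1),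
            ((classCard (g p) : ℂ) *
              ((R i).character (g p) * (R k).character (g p) *
                (starRingEnd ℂ) ((R j).character (g p)))) *
              (starRingEnd ℂ) ((R k).character (g m)) := by
          rw [Finset.sum_comm]
      _ = (Fintype.card G : ℂ)⁻¹ * ∑ p : Fin (n+1),
            ((classCard (g p) : ℂ) * ((R i).character (g p) *
              (starRingEnd ℂ) ((R j).character (g p)))) *
            ∑ k : Fin (n+1), (R k).character (g p) *
              (starRingEnd ℂ) ((R k).character (g m)) := by
          congr 1
          refine Finset.sum_congr rfl fun p _ => ?_
          rw [Finset.mul_sum]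
          refine Finset.sum_congr rfl fun k _ => ?_
          ring
      _ = (Fintype.card G : ℂ)⁻¹ * ∑ p : Fin (n+1),
            ((classCard (g p) : ℂ) * ((R i).character (g p) *
              (starRingEnd ℂ) ((R j).character (g p)))) *
            (if m = p then (Fintype.card G : ℂ) / (classCard (g m) : ℂ) else 0) := by
          congr 1
          refine Finset.sum_congr rfl fun p _ => ?_
          rw [aux_col_orth g hg R hsimple hdist m p]
      _ = (Fintype.card G : ℂ)⁻¹ * ((classCard (g m) : ℂ) * ((R i).character (g m) *
            (starRingEnd ℂ) ((R j).character (g m))) *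
            ((Fintype.card G : ℂ) / (classCard (g m) : ℂ))) := by
          congr 1
          simp only [mul_ite, mul_zero]
          rw [Finset.sum_ite_eq]
          simp
      _ = (R i).character (g m) * (starRingEnd ℂ) ((R j).character (g m)) := by
          field_simp
  -- now the rational-function computation
  have hfin : ∀ k, S 0 k = RatFunc.C ((Fintype.card G : ℂ)⁻¹) *
      ∑ m : Fin (n+1), (classCard (g m) : RatFunc ℂ) *
        RatFunc.C ((starRingEnd ℂ) ((R k).character (g m))) / molienDetRat ρ (g m) := by
    intro k
    rw [hS 0 k]
    congr 1
    refine Finset.sum_congr rfl fun m _ => ?_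
    rw [htriv (g m), map_one, mul_one]
  rw [hS i j]
  calc RatFunc.C ((Fintype.card G : ℂ)⁻¹) *
        ∑ k : Fin (n + 1), (classCard (g k) : RatFunc ℂ) *
          RatFunc.C ((R i).character (g k)) *
          RatFunc.C ((starRingEnd ℂ) ((R j).character (g k))) / molienDetRat ρ (g k)
      = RatFunc.C ((Fintype.card G : ℂ)⁻¹) *
        ∑ m : Fin (n + 1), ∑ k : Fin (n + 1),
          RatFunc.C (a k) * ((classCard (g m) : RatFunc ℂ) *
            RatFunc.C ((starRingEnd ℂ) ((R k).character (g m))) / molienDetRat ρ (g m)) := by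
        congr 1
        refine Finset.sum_congr rfl fun m _ => ?_
        have inner : ∑ k : Fin (n + 1),
            RatFunc.C (a k) * ((classCard (g m) : RatFunc ℂ) *
              RatFunc.C ((starRingEnd ℂ) ((R k).character (g m))) / molienDetRat ρ (g m))
            = (classCard (g m) : RatFunc ℂ) *
              RatFunc.C (∑ k : Fin (n+1), a k * (starRingEnd ℂ) ((R k).character (g m))) /
              molienDetRat ρ (g m) := by
          rw [map_sum, Finset.mul_sum, Finset.sum_div]
          refine Finset.sum_congr rfl fun k _ => ?_
          rw [map_mul]
          ring
        rw [inner, hkey m, map_mul]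
        ring
    _ = ∑ k : Fin (n + 1), RatFunc.C (a k) * S 0 k := by
        rw [Finset.sum_comm, Finset.mul_sum]
        refine Finset.sum_congr rfl fun k _ => ?_
        rw [hfin k, Finset.mul_sum, Finset.mul_sum, Finset.mul_sum]
        refine Finset.sum_congr rfl fun m _ => ?_
        ring
end

section
/- Let ρ: G → GL_d(ℂ) be a faithful representation with d ≥ 1, and fix 0 ≤ j ≤ n. Suppose there are positive integers n_1, …, n_d and m_1, …, m_μ (for some μ ≥ 0) such that, in the field ℂ(q) of rational functions, (1/|G|) Σ_{k=0}^n |C_k|·conj(χ_j(g_k)) / det(1 − q·ρ(g_k)) = (Σ_{s=1}^μ q^{m_s}) / (Π_{t=1}^d (1 − q^{n_t})). Then μ·|G| = d_j·n_1·n_2⋯n_d. -/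
open CategoryTheory
open Polynomial
open scoped Classical nonZeroDivisors

open scoped nonZeroDivisors

noncomputable section molienAuxSec

private lemma molien_comp_comp (p : ℂ[X]) : (p.comp (1 - X)).comp (1 - X) = p := by
  rw [Polynomial.comp_assoc]
  simp

private lemma molien_comp_ne_zero {p : ℂ[X]} (hp : p ≠ 0) : p.comp (1 - X) ≠ 0 := by
  intro h
  exact hp (by rw [← molien_comp_comp p, h, Polynomial.zero_comp])

/-- the hom `ℂ[X] → ℂ⸨X⸩`, `p ↦ p(1-X)`. -/
private def molienφ : ℂ[X] →+* LaurentSeries ℂ :=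
  (HahnSeries.ofPowerSeries ℤ ℂ).comp
    ((Polynomial.coeToPowerSeries.ringHom).comp (Polynomial.eval₂RingHom Polynomial.C (1 - X)))

private lemma molienφ_apply (p : ℂ[X]) :
    molienφ p = HahnSeries.ofPowerSeries ℤ ℂ ((p.comp (1 - X) : ℂ[X]) : PowerSeries ℂ) := rfl

private lemma molienφ_ne_zero {p : ℂ[X]} (hp : p ≠ 0) : molienφ p ≠ 0 := by
  rw [molienφ_apply]
  intro h
  have h2 : ((p.comp (1 - X) : ℂ[X]) : PowerSeries ℂ) = 0 :=
    HahnSeries.ofPowerSeries_injective (by rw [h, map_zero])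
  exact molien_comp_ne_zero hp (Polynomial.coe_eq_zero_iff.mp h2)

private lemma molienφ_cond : ℂ[X]⁰ ≤ (LaurentSeries ℂ)⁰.comap molienφ := by
  intro p hp
  rw [Submonoid.mem_comap, mem_nonZeroDivisors_iff_ne_zero]
  exact molienφ_ne_zero (nonZeroDivisors.ne_zero hp)

/-- The field hom `ℂ(X) → ℂ⸨X⸩`, `f ↦ f(1-X)`. -/
private def molienΦ : RatFunc ℂ →+* LaurentSeries ℂ := RatFunc.liftRingHom molienφ molienφ_cond

private lemma molienΦ_algebraMap (p : ℂ[X]) :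
    molienΦ (algebraMap ℂ[X] (RatFunc ℂ) p) = molienφ p := by
  have := RatFunc.liftRingHom_apply_div molienφ molienφ_cond p 1
  simp only [map_one, div_one] at this
  exact this

end molienAuxSec



-- step a: evaluation of charpolyRev
private lemma molien_eval_charpolyRev {d : ℕ} (M : Matrix (Fin d) (Fin d) ℂ) (z : ℂ) :
    (Matrix.charpolyRev M).eval z = Matrix.det (1 - z • M) := by
  rw [Matrix.charpolyRev, ← Polynomial.coe_evalRingHom, RingHom.map_det]
  congr 1
  ext i j
  rcases eq_or_ne i j with h | h <;>
    simp [h, Matrix.one_apply, Matrix.map_apply, Matrix.sub_apply, Matrix.smul_apply,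
      smul_eq_mul] <;> ring

-- step b: evaluation of charpoly
private lemma molien_eval_charpoly {d : ℕ} (M : Matrix (Fin d) (Fin d) ℂ) (w : ℂ) :
    (Matrix.charpoly M).eval w = Matrix.det (w • (1 : Matrix (Fin d) (Fin d) ℂ) - M) := by
  rw [Matrix.charpoly, ← Polynomial.coe_evalRingHom, RingHom.map_det]
  congr 1
  ext i j
  rcases eq_or_ne i j with h | h <;>
    simp [h, Matrix.charmatrix_apply_eq, Matrix.charmatrix_apply_ne, Matrix.one_apply,
      Matrix.sub_apply, Matrix.smul_apply, smul_eq_mul]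

private lemma molien_rigid {d : ℕ} (hd : 0 < d) (M : Matrix (Fin d) (Fin d) ℂ)
    {N : ℕ} (hN : 0 < N) (hMN : M ^ N = 1)
    (h : Matrix.charpolyRev M = (1 - X) ^ d) : M = 1 := by
  haveI : Nonempty (Fin d) := Fin.pos_iff_nonempty.mp hd
  -- charpoly = (X - 1)^d
  have hc : Matrix.charpoly M = (X - C 1) ^ d := by
    apply Polynomial.eq_of_infinite_eval_eq
    apply Set.Infinite.mono (s := {0}ᶜ) ?_ ((Set.finite_singleton (0:ℂ)).infinite_compl)
    intro w hw
    have hw : w ≠ 0 := hw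
    have h1 : Matrix.det (1 - w⁻¹ • M) = (1 - w⁻¹) ^ d := by
      have := molien_eval_charpolyRev M w⁻¹
      rw [h] at this
      simpa using this.symm
    have h2 : w • (1 : Matrix (Fin d) (Fin d) ℂ) - M = w • (1 - w⁻¹ • M) := by
      rw [smul_sub, smul_smul, mul_inv_cancel₀ hw, one_smul]
    have h3 : (Matrix.charpoly M).eval w = (w - 1) ^ d := by
      rw [molien_eval_charpoly, h2, Matrix.det_smul, h1, Fintype.card_fin]
      rw [← mul_pow]
      congr 1
      field_simp
    simp only [Set.mem_setOf_eq, h3, eval_pow, eval_sub, eval_X, eval_C]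
  -- minpoly divides (X - C 1)^d
  have hint : IsIntegral ℂ M := ⟨Matrix.charpoly M, Matrix.charpoly_monic M, by
    rw [← Polynomial.aeval_def]; exact Matrix.aeval_self_charpoly M⟩
  have hdvd : minpoly ℂ M ∣ (X - C 1) ^ d := by
    rw [← hc]
    exact minpoly.dvd ℂ M (Matrix.aeval_self_charpoly M)
  obtain ⟨i, hid, hassoc⟩ := (dvd_prime_pow (Polynomial.prime_X_sub_C (1 : ℂ)) d).mp hdvd
  have hmin : minpoly ℂ M = (X - C 1) ^ i :=
    Polynomial.eq_of_monic_of_associated (minpoly.monic hint)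
      ((Polynomial.monic_X_sub_C (1:ℂ)).pow i) hassoc
  -- i = 1
  have hi0 : i ≠ 0 := by
    intro h0
    rw [h0, pow_zero] at hmin
    have := minpoly.aeval ℂ M
    rw [hmin] at this
    simp at this
  have hdvd2 : minpoly ℂ M ∣ X ^ N - C 1 := by
    apply minpoly.dvd
    simp [hMN]
  have hsq : Squarefree (X ^ N - C (1:ℂ)) :=
    (Polynomial.separable_X_pow_sub_C (1:ℂ)
      (by exact_mod_cast Nat.cast_ne_zero.mpr hN.ne') one_ne_zero).squarefree
  have hi1 : i = 1 := by
    rcases Nat.lt_or_ge i 2 with h2 | h2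
    · omega
    · exfalso
      have : (X - C (1:ℂ)) * (X - C 1) ∣ X ^ N - C 1 := by
        refine dvd_trans ?_ hdvd2
        rw [hmin, ← pow_two]
        exact pow_dvd_pow _ h2
      exact (Polynomial.not_isUnit_X_sub_C (1:ℂ)) (hsq _ this)
  have := minpoly.aeval ℂ M
  rw [hmin, hi1, pow_one] at this
  simp only [map_sub, Polynomial.aeval_X, Polynomial.aeval_C, sub_eq_zero] at this
  rw [this]
  simp [Algebra.algebraMap_eq_smul_one]



private lemma molien_natDegree_one_sub_X : (1 - X : ℂ[X]).natDegree = 1 := by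
  have : (1 - X : ℂ[X]) = -(X - C 1) := by ring_nf; simp [sub_eq_add_neg]; ring
  rw [this, natDegree_neg, natDegree_X_sub_C]

private lemma molien_termA {d : ℕ} (P : ℂ[X]) (hP0 : P.eval 0 = 1) (hdeg : P.natDegree ≤ d)
    (hne : P ≠ (1 - X) ^ d) :
    ∃ W : PowerSeries ℂ,
      (HahnSeries.ofPowerSeries ℤ ℂ (PowerSeries.X)) ^ d *
        (HahnSeries.ofPowerSeries ℤ ℂ ((P.comp (1 - X) : ℂ[X]) : PowerSeries ℂ))⁻¹ =
        HahnSeries.ofPowerSeries ℤ ℂ W ∧ PowerSeries.constantCoeff (R := ℂ) W = 0 := by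
  classical
  set Q : ℂ[X] := P.comp (1 - X) with hQdef
  have hcc : (Q.comp (1 - X)) = P := by
    rw [hQdef, Polynomial.comp_assoc]; simp
  have hQ1 : Q.eval 1 = 1 := by
    rw [hQdef, Polynomial.eval_comp]; simpa using hP0
  have hQne : Q ≠ 0 := by intro h; rw [h] at hQ1; simp at hQ1
  obtain ⟨U, hU, hUdvd⟩ := Q.exists_eq_pow_rootMultiplicity_mul_and_not_dvd hQne 0
  rw [map_zero, sub_zero] at hU hUdvd
  set e := Q.rootMultiplicity 0 with he
  have hU0 : U.eval 0 ≠ 0 := by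
    intro h0
    exact hUdvd (Polynomial.X_dvd_iff.mpr (by rwa [Polynomial.coeff_zero_eq_eval_zero]))
  have hUne : U ≠ 0 := fun h => hU0 (by simp [h])
  have hdegQ : Q.natDegree = P.natDegree := by
    rw [hQdef, Polynomial.natDegree_comp, molien_natDegree_one_sub_X, mul_one]
  have hed : e + U.natDegree ≤ d := by
    have : Q.natDegree = e + U.natDegree := by
      rw [hU, Polynomial.natDegree_mul (pow_ne_zero _ Polynomial.X_ne_zero) hUne,
        Polynomial.natDegree_pow, natDegree_X, mul_one]
    omega
  have helt : e < d := by
    rcases Nat.lt_or_ge e d with h | h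
    · exact h
    · exfalso
      have hed' : e = d := le_antisymm (by omega) h
      have hUdeg : U.natDegree = 0 := by omega
      obtain ⟨c, hc⟩ := Polynomial.natDegree_eq_zero.mp hUdeg
      have h1 : Q = X ^ d * C c := by rw [hU, ← hc, hed']
      have hc1 : c = 1 := by
        have := hQ1
        rw [h1] at this
        simpa using this
      have hQX : Q = X ^ d := by rw [h1, hc1, map_one, mul_one]
      apply hne
      rw [← hcc, hQX]
      simp [Polynomial.X_pow_comp]
  -- unit part
  have hU0' : PowerSeries.constantCoeff (R := ℂ) (U : PowerSeries ℂ) ≠ 0 := by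
    rw [Polynomial.constantCoeff_coe, Polynomial.coeff_zero_eq_eval_zero]
    exact hU0
  have hUunit : IsUnit (U : PowerSeries ℂ) :=
    PowerSeries.isUnit_iff_constantCoeff.mpr (isUnit_iff_ne_zero.mpr hU0')
  obtain ⟨u, hu⟩ := hUunit
  set F := HahnSeries.ofPowerSeries ℤ ℂ with hF
  have hFinv : (F (U : PowerSeries ℂ))⁻¹ = F ((u⁻¹ : Units (PowerSeries ℂ)) : PowerSeries ℂ) := by
    apply inv_eq_of_mul_eq_one_right
    rw [← map_mul, ← hu, ← Units.val_mul, mul_inv_cancel, Units.val_one, map_one]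
  have hFX : F PowerSeries.X ≠ 0 := by
    intro h
    have : (PowerSeries.X : PowerSeries ℂ) = 0 :=
      HahnSeries.ofPowerSeries_injective (by rw [h, map_zero])
    exact PowerSeries.X_ne_zero this
  refine ⟨PowerSeries.X ^ (d - e) * ((u⁻¹ : Units (PowerSeries ℂ)) : PowerSeries ℂ), ?_, ?_⟩
  · have hQPS : (Q : PowerSeries ℂ) = PowerSeries.X ^ e * (U : PowerSeries ℂ) := by
      rw [hU, Polynomial.coe_mul, Polynomial.coe_pow, Polynomial.coe_X]
    rw [hQPS, map_mul, map_mul, map_pow, mul_inv, hFinv, map_pow, ← mul_assoc]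
    congr 1
    rw [pow_sub₀ _ hFX helt.le]
  · rw [map_mul, map_pow]
    simp [zero_pow (Nat.sub_ne_zero_of_lt helt)]



private lemma molien_classCard_one {G : Type*} [Group G] :
    Nat.card {y : G // IsConj 1 y} = 1 := by
  rw [Nat.card_eq_one_iff_unique]
  constructor
  · constructor
    rintro ⟨a, ha⟩ ⟨b, hb⟩
    have ha' : a = 1 := isConj_one_right.mp ha
    have hb' : b = 1 := isConj_one_right.mp hb
    exact Subtype.ext (ha'.trans hb'.symm)
  · exact ⟨⟨1, isConj_one_right.mpr rfl⟩⟩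

private lemma molien_denompoly {d : ℕ} (nn : Fin d → ℕ) :
    ∃ V : ℂ[X],
      ((∏ t, ((1 : ℂ[X]) - Polynomial.X ^ nn t)).comp (1 - Polynomial.X)
        = Polynomial.X ^ d * V) ∧ V.eval 0 = ∏ t, (nn t : ℂ) := by
  refine ⟨∏ t, ∑ i ∈ Finset.range (nn t), (1 - Polynomial.X) ^ i, ?_, ?_⟩
  · rw [Polynomial.prod_comp]
    have hterm : ∀ t : Fin d, ((1 : ℂ[X]) - Polynomial.X ^ nn t).comp (1 - Polynomial.X) =
        Polynomial.X * ∑ i ∈ Finset.range (nn t), (1 - Polynomial.X) ^ i := by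
      intro t
      rw [Polynomial.sub_comp, Polynomial.one_comp, Polynomial.pow_comp, Polynomial.X_comp]
      have hg := geom_sum_mul (1 - Polynomial.X : ℂ[X]) (nn t)
      linear_combination hg
    rw [Finset.prod_congr rfl (fun t _ => hterm t), Finset.prod_mul_distrib,
      Finset.prod_const, Finset.card_univ, Fintype.card_fin]
  · rw [Polynomial.eval_prod]
    refine Finset.prod_congr rfl ?_
    intro t _
    rw [Polynomial.eval_finset_sum]
    simp


private lemma molienDetRat_eq {G : Type} [Group G] {d : ℕ}
    (ρ : G →* Matrix.GeneralLinearGroup (Fin d) ℂ) (s : G) :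
    molienDetRat ρ s = algebraMap ℂ[X] (RatFunc ℂ)
      (Matrix.charpolyRev ((ρ s : Matrix (Fin d) (Fin d) ℂ))) := by
  rw [Matrix.charpolyRev, molienDetRat, RingHom.map_det]
  congr 1
  ext i j
  rcases eq_or_ne i j with h | h <;>
    simp [h, Matrix.one_apply, Matrix.map_apply, Matrix.sub_apply, Matrix.smul_apply,
      smul_eq_mul, RatFunc.algebraMap_X, RatFunc.algebraMap_C] <;> ring

private lemma molien_FX_ne_zero :
    HahnSeries.ofPowerSeries ℤ ℂ (PowerSeries.X) ≠ 0 := by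
  intro h
  have : (PowerSeries.X : PowerSeries ℂ) = 0 :=
    HahnSeries.ofPowerSeries_injective (by rw [h, map_zero])
  exact PowerSeries.X_ne_zero this

theorem stmt8 {G : Type} [Group G] [Fintype G] {n : ℕ}
    (g : Fin (n + 1) → G) (hg1 : g 0 = 1)
    (hg : ∀ x : G, ∃! k : Fin (n + 1), IsConj (g k) x)
    (R : Fin (n + 1) → FDRep ℂ G)
    (hsimple : ∀ i, Simple (R i))
    (htriv : ∀ x : G, (R 0).character x = 1)
    (hdist : ∀ i j, i ≠ j → ¬ Nonempty (R i ≅ R j))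
    {d : ℕ} (hd : 1 ≤ d) (ρ : G →* Matrix.GeneralLinearGroup (Fin d) ℂ)
    (hfaithful : Function.Injective ρ)
    (j : Fin (n + 1))
    {μ : ℕ} (nn : Fin d → ℕ) (hnn : ∀ t, 0 < nn t)
    (m : Fin μ → ℕ) (hm : ∀ s, 0 < m s)
    -- Cohen–Macaulay property: the Molien series of the `R j`-isotypic component
    -- is `(Σ_s q^{m_s}) / (Π_t (1 − q^{n_t}))`
    (hCM : RatFunc.C ((Fintype.card G : ℂ)⁻¹) *
        (∑ k : Fin (n + 1), (classCard (g k) : RatFunc ℂ) *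
          RatFunc.C ((starRingEnd ℂ) ((R j).character (g k))) / molienDetRat ρ (g k)) =
      (∑ s : Fin μ, (RatFunc.X : RatFunc ℂ) ^ m s) /
        ∏ t : Fin d, ((1 : RatFunc ℂ) - RatFunc.X ^ nn t)) :
    (μ : ℂ) * (Fintype.card G : ℂ) = (R j).character 1 * ∏ t : Fin d, (nn t : ℂ) := by
  classical
  haveI : Nonempty (Fin d) := Fin.pos_iff_nonempty.mp hd
  set F := HahnSeries.ofPowerSeries ℤ ℂ with hF
  have hcard : (Fintype.card G : ℂ) ≠ 0 := Nat.cast_ne_zero.mpr Fintype.card_pos.ne'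
  have hΦC : ∀ a : ℂ, molienΦ (RatFunc.C a) = F (PowerSeries.C (R := ℂ) a) := by
    intro a
    rw [← RatFunc.algebraMap_C a, molienΦ_algebraMap, molienφ_apply, Polynomial.C_comp,
      Polynomial.coe_C]
  have hΦX : molienΦ (RatFunc.X : RatFunc ℂ) =
      F (((1 - Polynomial.X : ℂ[X]) : PowerSeries ℂ)) := by
    rw [← RatFunc.algebraMap_X (K := ℂ), molienΦ_algebraMap, molienφ_apply, Polynomial.X_comp]
  -- per-conjugacy-class terms
  have hW : ∀ k : Fin (n + 1), ∃ W : PowerSeries ℂ,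
      (F PowerSeries.X) ^ d * (molienΦ (molienDetRat ρ (g k)))⁻¹ = F W ∧
      PowerSeries.constantCoeff (R := ℂ) W = if k = 0 then 1 else 0 := by
    intro k
    by_cases hk : k = 0
    · subst hk
      refine ⟨1, ?_, by simp⟩
      have hM : ((ρ (g 0) : Matrix (Fin d) (Fin d) ℂ)) = 1 := by
        rw [hg1, map_one, Units.val_one]
      have hsmul : (1 : Matrix (Fin d) (Fin d) ℂ[X]) -
          (Polynomial.X : ℂ[X]) • (1 : Matrix (Fin d) (Fin d) ℂ).map Polynomial.C =
          ((1 - Polynomial.X : ℂ[X]) • (1 : Matrix (Fin d) (Fin d) ℂ[X])) := by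
        ext i j
        rcases eq_or_ne i j with h | h <;>
          simp [h, Matrix.one_apply, Matrix.map_apply, Matrix.sub_apply, Matrix.smul_apply,
            smul_eq_mul]
      have hP : Matrix.charpolyRev ((ρ (g 0) : Matrix (Fin d) (Fin d) ℂ)) =
          (1 - Polynomial.X) ^ d := by
        rw [hM, Matrix.charpolyRev, hsmul, Matrix.det_smul, Matrix.det_one, Fintype.card_fin,
          mul_one]
      have hcomp : ((1 - Polynomial.X : ℂ[X]) ^ d).comp (1 - Polynomial.X) =
          Polynomial.X ^ d := by
        rw [Polynomial.pow_comp, Polynomial.sub_comp, Polynomial.one_comp, Polynomial.X_comp]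
        ring
      rw [molienDetRat_eq ρ (g 0), hP, molienΦ_algebraMap, molienφ_apply, hcomp,
        Polynomial.coe_pow, Polynomial.coe_X, map_pow, map_one]
      exact mul_inv_cancel₀ (pow_ne_zero _ molien_FX_ne_zero)
    · have hMpow : ((ρ (g k) : Matrix (Fin d) (Fin d) ℂ)) ^ (Fintype.card G) = 1 := by
        rw [← Units.val_pow_eq_pow_val, ← map_pow, pow_card_eq_one, map_one, Units.val_one]
      have hne : Matrix.charpolyRev ((ρ (g k) : Matrix (Fin d) (Fin d) ℂ)) ≠
          (1 - Polynomial.X) ^ d := by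
        intro hP
        have hM1 : ((ρ (g k) : Matrix (Fin d) (Fin d) ℂ)) = 1 :=
          molien_rigid hd _ Fintype.card_pos hMpow hP
        have hρ1 : ρ (g k) = 1 := Units.ext hM1
        have hgk : g k = 1 := hfaithful (by rw [hρ1, map_one])
        refine hk ((hg 1).unique ?_ ?_)
        · rw [hgk]
        · rw [hg1]
      have hdeg : (Matrix.charpolyRev ((ρ (g k) : Matrix (Fin d) (Fin d) ℂ))).natDegree ≤ d := by
        rw [← Matrix.reverse_charpoly]
        refine le_trans (Polynomial.reverse_natDegree_le _) ?_
        rw [Matrix.charpoly_natDegree_eq_dim, Fintype.card_fin]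
      obtain ⟨W, hW1, hW2⟩ := molien_termA _ (Matrix.eval_charpolyRev) hdeg hne
      refine ⟨W, ?_, by rw [hW2]; simp [hk]⟩
      rw [molienDetRat_eq ρ (g k), molienΦ_algebraMap, molienφ_apply]
      exact hW1
  choose W hWeq hWcc using hW
  -- denominator
  obtain ⟨V, hVcomp, hVeval⟩ := molien_denompoly nn
  have hVcc : PowerSeries.constantCoeff (R := ℂ) (V : PowerSeries ℂ) = ∏ t, (nn t : ℂ) := by
    rw [Polynomial.constantCoeff_coe, Polynomial.coeff_zero_eq_eval_zero, hVeval]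
  have hprodnn : (∏ t, (nn t : ℂ)) ≠ 0 := by
    refine Finset.prod_ne_zero_iff.mpr ?_
    intro t _
    exact Nat.cast_ne_zero.mpr (hnn t).ne'
  have hVunit : IsUnit (V : PowerSeries ℂ) :=
    PowerSeries.isUnit_iff_constantCoeff.mpr (isUnit_iff_ne_zero.mpr (by rw [hVcc]; exact hprodnn))
  obtain ⟨u, hu⟩ := hVunit
  have hFVinv : (F (V : PowerSeries ℂ))⁻¹ =
      F ((u⁻¹ : Units (PowerSeries ℂ)) : PowerSeries ℂ) := by
    apply inv_eq_of_mul_eq_one_right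
    rw [← map_mul, ← hu, ← Units.val_mul, mul_inv_cancel, Units.val_one, map_one]
  have huinv_cc : PowerSeries.constantCoeff (R := ℂ) ((u⁻¹ : Units (PowerSeries ℂ)) : PowerSeries ℂ) =
      (∏ t, (nn t : ℂ))⁻¹ := by
    have h1 : (PowerSeries.constantCoeff (R := ℂ)) ((u : PowerSeries ℂ)) *
        (PowerSeries.constantCoeff (R := ℂ)) ((u⁻¹ : Units (PowerSeries ℂ)) : PowerSeries ℂ) = 1 := by
      rw [← map_mul, ← Units.val_mul, mul_inv_cancel, Units.val_one, map_one]
    rw [hu, hVcc] at h1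
    exact eq_inv_of_mul_eq_one_right h1
  have hΦden : molienΦ (∏ t, ((1 : RatFunc ℂ) - RatFunc.X ^ nn t)) =
      (F PowerSeries.X) ^ d * F (V : PowerSeries ℂ) := by
    have h1 : (∏ t, ((1 : RatFunc ℂ) - RatFunc.X ^ nn t)) =
        algebraMap ℂ[X] (RatFunc ℂ) (∏ t, ((1 : ℂ[X]) - Polynomial.X ^ nn t)) := by
      rw [map_prod]
      refine Finset.prod_congr rfl ?_
      intro t _
      rw [map_sub, map_one, map_pow, RatFunc.algebraMap_X]
    rw [h1, molienΦ_algebraMap, molienφ_apply, hVcomp, Polynomial.coe_mul, Polynomial.coe_pow,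
      Polynomial.coe_X, map_mul, map_pow]
  -- apply Φ to hCM
  have H := congrArg molienΦ hCM
  simp only [map_mul, map_sum, map_div₀, map_pow, map_natCast] at H
  have H2 := congrArg (fun z : LaurentSeries ℂ => (F PowerSeries.X) ^ d * z) H
  -- left side
  have hterm : ∀ k : Fin (n + 1),
      (F PowerSeries.X) ^ d * (((classCard (g k) : LaurentSeries ℂ)) *
        molienΦ (RatFunc.C ((starRingEnd ℂ) ((R j).character (g k)))) /
        molienΦ (molienDetRat ρ (g k))) =
      F (((classCard (g k) : PowerSeries ℂ)) *
        PowerSeries.C (R := ℂ) ((starRingEnd ℂ) ((R j).character (g k))) * W k) := by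
    intro k
    rw [div_eq_mul_inv, mul_left_comm, hWeq k, hΦC, map_mul, map_mul, map_natCast]
  have hL : (F PowerSeries.X) ^ d *
      (molienΦ (RatFunc.C ((Fintype.card G : ℂ)⁻¹)) *
        ∑ k, ((classCard (g k) : LaurentSeries ℂ)) *
          molienΦ (RatFunc.C ((starRingEnd ℂ) ((R j).character (g k)))) /
          molienΦ (molienDetRat ρ (g k))) =
      F (PowerSeries.C (R := ℂ) ((Fintype.card G : ℂ)⁻¹) *
        ∑ k, ((classCard (g k) : PowerSeries ℂ)) *
          PowerSeries.C (R := ℂ) ((starRingEnd ℂ) ((R j).character (g k))) * W k) := by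
    rw [mul_left_comm, Finset.mul_sum, Finset.sum_congr rfl (fun k _ => hterm k), hΦC,
      map_mul, map_sum]
  -- right side
  have hR : (F PowerSeries.X) ^ d *
      ((∑ s : Fin μ, (molienΦ (RatFunc.X : RatFunc ℂ)) ^ m s) /
        molienΦ (∏ t, ((1 : RatFunc ℂ) - RatFunc.X ^ nn t))) =
      F ((∑ s : Fin μ, ((1 - Polynomial.X : ℂ[X]) : PowerSeries ℂ) ^ m s) *
        ((u⁻¹ : Units (PowerSeries ℂ)) : PowerSeries ℂ)) := by
    have hXd : (F PowerSeries.X) ^ d ≠ 0 := pow_ne_zero _ molien_FX_ne_zero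
    rw [hΦden, div_eq_mul_inv, mul_inv, hFVinv, map_mul, map_sum]
    have hS : ∀ s : Fin μ, molienΦ (RatFunc.X : RatFunc ℂ) ^ m s =
        F (((1 - Polynomial.X : ℂ[X]) : PowerSeries ℂ) ^ m s) := fun s => by rw [hΦX, map_pow]
    rw [Finset.sum_congr rfl (fun s _ => hS s)]
    field_simp
  -- compare power series
  have hPS := HahnSeries.ofPowerSeries_injective (R := ℂ) (hL.symm.trans (H2.trans hR))
  have hcc := congrArg (PowerSeries.constantCoeff (R := ℂ)) hPS
  simp only [map_mul, map_sum, PowerSeries.constantCoeff_C, map_natCast, hWcc, map_pow,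
    Polynomial.constantCoeff_coe, Polynomial.coeff_sub, Polynomial.coeff_one_zero,
    Polynomial.coeff_X_zero, sub_zero, one_pow, mul_ite, mul_one, mul_zero,
    Finset.sum_ite_eq', Finset.mem_univ, if_true, Finset.sum_const, Finset.card_univ,
    Fintype.card_fin, nsmul_eq_mul, huinv_cc] at hcc
  have hclass : classCard ((1 : G)) = 1 := molien_classCard_one
  have hχ : (starRingEnd ℂ) ((R j).character 1) = (R j).character 1 := by
    rw [FDRep.char_one]
    simp
  rw [hg1, hclass, hχ] at hcc
  rw [Nat.cast_one, one_mul] at hcc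
  field_simp at hcc
  rw [FDRep.char_one] at hcc ⊢
  linear_combination -hcc
end

section
/- Assume n ≥ 1 and let χ̃ be the n×n 'Euclidean' character table of G, i.e., the matrix with entries χ̃^i_j = χ_i(g_j) for 1 ≤ i, j ≤ n (the character table with the row of the trivial character and the column of the identity class removed). Then χ̃ is invertible and its inverse has entries (χ̃^{-1})^i_j = (|C_i|/|G|)·( conj(χ_j(g_i)) − d_j ); equivalently, for all 1 ≤ i, j ≤ n, Σ_{k=1}^n χ_i(g_k)·(|C_k|/|G|)·( conj(χ_j(g_k)) − d_j ) = δ_{ij}. -/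
open CategoryTheory
open scoped Classical

section Auxiliary
open Polynomial Matrix

lemma my_eval_charpoly {d : ℕ} (M : Matrix (Fin d) (Fin d) ℂ) (x : ℂ) :
    (M.charpoly).eval x = (x • (1 : Matrix (Fin d) (Fin d) ℂ) - M).det := by
  rw [charpoly, eval_det, matPolyEquiv_charmatrix]
  simp [smul_one_eq_diagonal]

lemma my_root_pow {d m : ℕ} (M : Matrix (Fin d) (Fin d) ℂ) (hM : M ^ m = 1)
    {μ : ℂ} (hμ : μ ∈ M.charpoly.roots) : μ ^ m = 1 := by
  have hroot : (M.charpoly).eval μ = 0 := Polynomial.isRoot_of_mem_roots hμ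
  rw [my_eval_charpoly] at hroot
  obtain ⟨v, hv0, hv⟩ := (Matrix.exists_mulVec_eq_zero_iff).2 hroot
  have hMv : M *ᵥ v = μ • v := by
    have h1 := sub_mulVec (μ • (1 : Matrix (Fin d) (Fin d) ℂ)) M v
    rw [hv] at h1
    have h2 : (μ • (1 : Matrix (Fin d) (Fin d) ℂ)) *ᵥ v = μ • v := by
      simp [smul_mulVec]
    rw [h2] at h1
    have := sub_eq_zero.1 h1.symm
    exact this.symm ▸ rfl
  have key : ∀ j : ℕ, (M ^ j) *ᵥ v = μ ^ j • v := by
    intro j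
    induction j with
    | zero => simp
    | succ j ih =>
      rw [pow_succ', ← Matrix.mulVec_mulVec, ih, Matrix.mulVec_smul, hMv,
        smul_smul, pow_succ']
      ring_nf
  have hfin := key m
  rw [hM] at hfin
  simp only [Matrix.one_mulVec] at hfin
  obtain ⟨i, hi⟩ := Function.ne_iff.1 hv0
  have : v i = μ ^ m * v i := congrFun hfin i
  have h3 : (μ ^ m - 1) * v i = 0 := by linear_combination -this
  rcases mul_eq_zero.1 h3 with h | h
  · exact sub_eq_zero.1 h
  · exact absurd h hi

lemma conj_of_pow_eq_one {μ : ℂ} {m : ℕ} (hm : m ≠ 0) (h : μ ^ m = 1) :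
    (starRingEnd ℂ) μ = μ⁻¹ := by
  have habs : ‖μ‖ ^ m = 1 := by
    rw [← norm_pow, h]; simp
  have habs1 : ‖μ‖ = 1 := by
    rcases (pow_eq_one_iff_cases.1 habs) with h | h | h
    · omega
    · exact h
    · exfalso; have := norm_nonneg μ; rw [h.1] at this; linarith
  apply eq_inv_of_mul_eq_one_left
  rw [mul_comm, Complex.mul_conj]
  norm_cast
  rw [Complex.normSq_eq_norm_sq, habs1]; norm_num

lemma my_trace_inv {d m : ℕ} (hm : m ≠ 0) (M : Matrix (Fin d) (Fin d) ℂ)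
    (hM : M ^ m = 1) : M⁻¹.trace = (starRingEnd ℂ) M.trace := by
  have hdet : IsUnit M.det := by
    apply IsUnit.of_mul_eq_one (M.det ^ (m - 1))
    rw [← pow_succ', show m - 1 + 1 = m from by omega, ← Matrix.det_pow,
      hM, Matrix.det_one]
  have hdet0 : M.det ≠ 0 := hdet.ne_zero
  set s := M.charpoly.roots with hs
  have hsp : M.charpoly = (s.map fun μ => X - C μ).prod :=
    (IsAlgClosed.splits _).eq_prod_roots_of_monic (Matrix.charpoly_monic M)
  have hcard : Multiset.card s = d := by
    rw [hs, (splits_iff_card_roots).1 (IsAlgClosed.splits _),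
      Matrix.charpoly_natDegree_eq_dim, Fintype.card_fin]
  have hdetprod : M.det = s.prod := by
    simpa using Matrix.det_eq_prod_roots_charpoly M
  have hq : M⁻¹.charpoly = (s.map fun μ => X - C μ⁻¹).prod := by
    apply Polynomial.eq_of_infinite_eval_eq
    apply Set.Infinite.mono (s := {(0:ℂ)}ᶜ)
    swap
    · exact Set.Finite.infinite_compl (Set.finite_singleton 0)
    intro x hx
    have hx0 : x ≠ 0 := hx
    simp only [Set.mem_setOf_eq]
    have key : M.det * ((x • (1 : Matrix (Fin d) (Fin d) ℂ) - M⁻¹).det)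
        = (x • M - 1).det := by
      rw [← Matrix.det_mul]
      congr 1
      rw [Matrix.mul_sub, Matrix.mul_smul, Matrix.mul_one,
        Matrix.mul_nonsing_inv M hdet]
    have hfact : x • M - (1 : Matrix (Fin d) (Fin d) ℂ)
        = (-x) • (x⁻¹ • (1 : Matrix (Fin d) (Fin d) ℂ) - M) := by
      rw [smul_sub, smul_smul, neg_mul, mul_inv_cancel₀ hx0, neg_smul, one_smul, neg_smul]
      abel
    have key2 : (x • M - (1 : Matrix (Fin d) (Fin d) ℂ)).det
        = (-x) ^ d * (M.charpoly.eval x⁻¹) := by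
      rw [hfact, Matrix.det_smul, my_eval_charpoly, Fintype.card_fin]
    -- eval of the two polynomials
    rw [my_eval_charpoly]
    have heval1 : M.charpoly.eval x⁻¹ = (s.map fun μ => x⁻¹ - μ).prod := by
      rw [hsp, Polynomial.eval_multiset_prod, Multiset.map_map]
      simp [Function.comp]
    have heval2 : Polynomial.eval x ((s.map fun μ => X - C μ⁻¹).prod)
        = (s.map fun μ => x - μ⁻¹).prod := by
      rw [Polynomial.eval_multiset_prod, Multiset.map_map]
      simp [Function.comp]
    -- multiply both sides by det M ≠ 0
    apply mul_left_cancel₀ hdet0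
    rw [key, key2, heval1, heval2]
    have hL : (-x) ^ d * (Multiset.map (fun μ => x⁻¹ - μ) s).prod
        = (Multiset.map (fun μ => μ * x - 1) s).prod := by
      rw [← hcard, ← Multiset.prod_replicate, ← Multiset.map_const']
      rw [← Multiset.prod_map_mul]
      congr 1
      apply Multiset.map_congr rfl
      intro μ hμ
      have hμ0 : μ ≠ 0 := by
        intro h0
        have := my_root_pow M hM hμ
        rw [h0, zero_pow hm] at this
        exact zero_ne_one this
      field_simp
      ring
    have hR : M.det * (Multiset.map (fun μ => x - μ⁻¹) s).prod
        = (Multiset.map (fun μ => μ * x - 1) s).prod := by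
      have hid : s.prod = (Multiset.map (fun μ => μ) s).prod := by
        rw [Multiset.map_id']
      rw [hdetprod, hid, ← Multiset.prod_map_mul]
      · congr 1
        apply Multiset.map_congr rfl
        intro μ hμ
        have hμ0 : μ ≠ 0 := by
          intro h0
          have := my_root_pow M hM hμ
          rw [h0, zero_pow hm] at this
          exact zero_ne_one this
        field_simp
    rw [hR, hL]
  -- now compute traces
  have htr : M⁻¹.trace = (s.map fun μ => μ⁻¹).sum := by
    rw [Matrix.trace_eq_sum_roots_charpoly, hq]
    have : (s.map fun μ => X - C μ⁻¹) = ((s.map fun μ => μ⁻¹).map fun a => X - C a) := by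
      simp [Multiset.map_map, Function.comp]
    rw [this, Polynomial.roots_multiset_prod_X_sub_C]
  rw [htr, Matrix.trace_eq_sum_roots_charpoly, ← hs]
  rw [map_multiset_sum (starRingEnd ℂ) s]
  congr 1
  apply Multiset.map_congr rfl
  intro μ hμ
  exact (conj_of_pow_eq_one hm (my_root_pow M hM hμ)).symm

lemma my_char_star {G : Type} [Group G] [Fintype G] (V : FDRep ℂ G) (x : G) :
    (starRingEnd ℂ) (V.character x) = V.character x⁻¹ := by
  classical
  let b := Module.finBasis ℂ V
  set M := LinearMap.toMatrixAlgEquiv b (V.ρ x) with hM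
  set N := LinearMap.toMatrixAlgEquiv b (V.ρ x⁻¹) with hN
  have hm : orderOf x ≠ 0 := (orderOf_pos x).ne'
  have hMpow : M ^ orderOf x = 1 := by
    rw [hM, ← map_pow, ← map_pow, pow_orderOf_eq_one, _root_.map_one, _root_.map_one]
  have hMN : M * N = 1 := by
    rw [hM, hN, ← _root_.map_mul, ← _root_.map_mul, mul_inv_cancel, _root_.map_one, _root_.map_one]
  have hNinv : N = M⁻¹ := (Matrix.inv_eq_right_inv hMN).symm
  have h1 : V.character x = M.trace :=
    LinearMap.trace_eq_matrix_trace ℂ b (V.ρ x)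
  have h2 : V.character x⁻¹ = N.trace :=
    LinearMap.trace_eq_matrix_trace ℂ b (V.ρ x⁻¹)
  rw [h1, h2, hNinv, my_trace_inv hm M hMpow]

lemma my_ortho {G : Type} [Group G] [Fintype G] (V W : FDRep ℂ G)
    [Simple V] [Simple W] :
    ∑ x : G, V.character x * W.character x⁻¹ =
      if Nonempty (V ≅ W) then (Fintype.card G : ℂ) else 0 := by
  have h := FDRep.char_orthonormal (k := ℂ) (G := G) V W
  have hc : (Nat.card G : ℂ) ≠ 0 := by exact_mod_cast Nat.card_pos.ne'
  rw [inv_mul_eq_iff_eq_mul₀ hc] at h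
  rw [h, Nat.card_eq_fintype_card]
  split_ifs <;> simp
end Auxiliary

theorem stmt11 {G : Type} [Group G] [Fintype G] {n : ℕ} (hn : 1 ≤ n)
    (g : Fin (n + 1) → G) (hg1 : g 0 = 1)
    (hg : ∀ x : G, ∃! k : Fin (n + 1), IsConj (g k) x)
    (R : Fin (n + 1) → FDRep ℂ G)
    (hsimple : ∀ i, Simple (R i))
    (htriv : ∀ x : G, (R 0).character x = 1)
    (hdist : ∀ i j, i ≠ j → ¬ Nonempty (R i ≅ R j))
    -- `χt` : the Euclidean character table
    (χt : Matrix (Fin n) (Fin n) ℂ)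
    (hχt : ∀ i j : Fin n, χt i j = (R i.succ).character (g j.succ))
    -- `A` : the claimed inverse of `χt`
    (A : Matrix (Fin n) (Fin n) ℂ)
    (hA : ∀ i j : Fin n, A i j =
      (classCard (g i.succ) : ℂ) / (Fintype.card G : ℂ) *
        ((starRingEnd ℂ) ((R j.succ).character (g i.succ)) - (R j.succ).character 1)) :
    χt * A = 1 ∧ A * χt = 1 := by
  haveI := hsimple
  set cG : ℂ := (Fintype.card G : ℂ) with hcG
  have hcG0 : cG ≠ 0 := by rw [hcG]; exact_mod_cast Fintype.card_ne_zero
  -- the fibering map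
  have hfiber : ∀ (k : Fin (n + 1)) (x : G),
      ((hg x).choose = k) ↔ IsConj (g k) x := by
    intro k x
    constructor
    · rintro rfl; exact (hg x).choose_spec.1
    · intro h; exact ((hg x).choose_spec.2 k h).symm
  have hclass : ∀ k : Fin (n + 1),
      (classCard (g k) : ℂ) =
        ((Finset.univ.filter (fun x : G => (hg x).choose = k)).card : ℂ) := by
    intro k
    congr 1
    rw [classCard, Nat.card_eq_fintype_card, Fintype.card_subtype]
    congr 1
    apply Finset.filter_congr
    intro x _
    exact (hfiber k x).symm
  -- class function summation
  have hsum : ∀ (F : G → ℂ), (∀ (x y : G), IsConj x y → F x = F y) →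
      ∑ x : G, F x = ∑ k : Fin (n + 1), (classCard (g k) : ℂ) * F (g k) := by
    intro F hF
    rw [← Finset.sum_fiberwise Finset.univ (fun x : G => (hg x).choose) F]
    apply Finset.sum_congr rfl
    intro k _
    have hcon : ∀ x ∈ Finset.univ.filter (fun x : G => (hg x).choose = k),
        F x = F (g k) := by
      intro x hx
      rw [Finset.mem_filter] at hx
      exact (hF (g k) x ((hfiber k x).1 hx.2)).symm
    rw [Finset.sum_congr rfl hcon, Finset.sum_const, hclass k]
    simp [nsmul_eq_mul]
  -- characters are class functions
  have hchar : ∀ (V : FDRep ℂ G) (x y : G), IsConj x y →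
      V.character x = V.character y := by
    intro V x y hxy
    obtain ⟨c, hc⟩ := isConj_iff.1 hxy
    rw [← hc, FDRep.char_conj]
  -- orthogonality in class-sum form
  have horth : ∀ i j : Fin (n + 1),
      ∑ k : Fin (n + 1), (classCard (g k) : ℂ) *
        ((R i).character (g k) * (starRingEnd ℂ) ((R j).character (g k))) =
      if i = j then cG else 0 := by
    intro i j
    have h1 := my_ortho (R i) (R j)
    have h2 : ∀ x : G, (R i).character x * (R j).character x⁻¹ =
        (R i).character x * (starRingEnd ℂ) ((R j).character x) := by
      intro x; rw [my_char_star]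
    rw [Finset.sum_congr rfl (fun x _ => h2 x)] at h1
    have hF : ∀ (x y : G), IsConj x y →
        (R i).character x * (starRingEnd ℂ) ((R j).character x) =
        (R i).character y * (starRingEnd ℂ) ((R j).character y) := by
      intro x y hxy
      rw [hchar (R i) x y hxy, hchar (R j) x y hxy]
    rw [← hsum _ hF, h1]
    by_cases hij : i = j
    · subst hij
      rw [if_pos ⟨Iso.refl _⟩, if_pos rfl]
    · rw [if_neg (hdist i j hij), if_neg hij]
  -- values at k = 0
  have e0 : (classCard (g 0) : ℂ) = 1 := by
    have : classCard (g 0) = 1 := by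
      rw [hg1, classCard, Nat.card_eq_fintype_card, Fintype.card_subtype]
      have : Finset.univ.filter (fun y : G => IsConj 1 y) = {1} := by
        ext y
        simp [isConj_comm, isConj_one_right, eq_comm]
      rw [this, Finset.card_singleton]
    exact_mod_cast this
  have hg0 : ∀ a : Fin (n + 1), (R a).character (g 0) = (R a).character 1 := by
    intro a; rw [hg1]
  have hstar_d : ∀ a : Fin (n + 1),
      (starRingEnd ℂ) ((R a).character 1) = (R a).character 1 := by
    intro a
    rw [FDRep.char_one]
    exact Complex.conj_natCast _
  -- the main computation
  have key : χt * A = 1 := by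
    ext i j
    rw [Matrix.mul_apply, Matrix.one_apply]
    have S1 := horth i.succ j.succ
    have S2 := horth i.succ 0
    rw [Fin.sum_univ_succ] at S1 S2
    simp only [hg0, e0, hstar_d, one_mul] at S1
    simp only [Fin.succ_inj] at S1
    simp only [htriv, map_one, mul_one, hg0, e0, one_mul] at S2
    rw [if_neg (Fin.succ_ne_zero i)] at S2
    have S1' : ∑ k : Fin n, (classCard (g k.succ) : ℂ) *
        ((R i.succ).character (g k.succ) *
          (starRingEnd ℂ) ((R j.succ).character (g k.succ))) =
        (if i = j then cG else 0) -
          (R i.succ).character 1 * (R j.succ).character 1 := by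
      linear_combination S1
    have S2' : ∑ k : Fin n, (classCard (g k.succ) : ℂ) *
        (R i.succ).character (g k.succ) = - (R i.succ).character 1 := by
      linear_combination S2
    have expand : ∀ k : Fin n, χt i k * A k j =
        ((classCard (g k.succ) : ℂ) * ((R i.succ).character (g k.succ) *
          (starRingEnd ℂ) ((R j.succ).character (g k.succ)))) / cG -
        (R j.succ).character 1 *
          ((classCard (g k.succ) : ℂ) * (R i.succ).character (g k.succ)) / cG := by
      intro k
      rw [hχt, hA]
      field_simp
    rw [Finset.sum_congr rfl (fun k _ => expand k), Finset.sum_sub_distrib,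
      ← Finset.sum_div, ← Finset.sum_div, ← Finset.mul_sum, S1', S2']
    split_ifs with hij
    · field_simp
      ring
    · field_simp
      ring
  exact ⟨key, mul_eq_one_comm.mp key⟩
end
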